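/- arXiv:1211.5982 — 8 statements merged into one kernel-verified Lean document; each statement's English description precedes it below -/
import Mathlib

section
/- If g is an isometry of U_1 that is not the identity, then some finite product of conjugates of g moves some element of U_1 by distance exactly 1. -/
/-- A metric space is a bounded Urysohn space of diameter 1 if it is complete, separable,
has diameter at most 1, is homogeneous (every isometry between finite subsets extends to a
global surjective isometry), and embeds every finite metric space of diameter at most 1. -/
structure IsUrysohnOne (X : Type) [MetricSpace X] : Prop where
  complete : CompleteSpace X
  separable : TopologicalSpace.SeparableSpace X
  diam_le_one : ∀ x y : X, dist x y ≤ 1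
  homogeneous : ∀ (s : Finset X) (f : X → X),
    (∀ x ∈ s, ∀ y ∈ s, dist (f x) (f y) = dist x y) →
    ∃ g : X ≃ᵢ X, ∀ x ∈ s, g x = f x
  universal : ∀ (Y : Type) [MetricSpace Y] [Finite Y],
    (∀ y z : Y, dist y z ≤ 1) → ∃ f : Y → X, Isometry f

/-- `A` and `C` are independent over `B`. -/
def Indep {X : Type} [MetricSpace X] (A B C : Set X) : Prop :=
  ∀ a ∈ A, ∀ c ∈ C, dist a c < 1 → ∃ b ∈ B, dist a c = dist a b + dist b c

/-- The distance of the type `tp a / S`. -/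
noncomputable def typeDist {X : Type} [MetricSpace X] (a : X) (S : Finset X)
    (hS : S.Nonempty) : ℝ := S.inf' hS (fun b => dist a b)

/-- `x` realises the type of `a` over `S`. -/
def Realises {X : Type} [MetricSpace X] (x a : X) (S : Finset X) : Prop :=
  ∀ b ∈ S, dist x b = dist a b

/-- `g` moves the type of `a` over `S` almost maximally. -/
def MovesAlmostMax {X : Type} [MetricSpace X] (g : X ≃ᵢ X) (a : X) (S : Finset X) : Prop :=
  ∃ x : X, Realises x a S ∧ Indep {x} (↑S) {g x}

/-- `g` moves the type of `a` over `S` by distance `C`. -/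
def MovesBy {X : Type} [MetricSpace X] (g : X ≃ᵢ X) (a : X) (S : Finset X) (C : ℝ) : Prop :=
  ∃ x : X, Realises x a S ∧ C ≤ dist x (g x)

/-- `k` is a conjugate of `g` or of `g⁻¹`. -/
def IsConjOfOrInv {G : Type} [Group G] (g k : G) : Prop :=
  ∃ h : G, k = h * g * h⁻¹ ∨ k = h * g⁻¹ * h⁻¹


private lemma min_one_add (a b : ℝ) (ha : 0 ≤ a) (hb : 0 ≤ b) :
    min 1 (a + b) ≤ min 1 a + min 1 b := by
  rcases le_total 1 a with h | h
  · have h1 : min 1 a = 1 := min_eq_left h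
    calc min 1 (a+b) ≤ 1 := min_le_left _ _
    _ ≤ min 1 a + min 1 b := by rw [h1]; have := le_min zero_le_one hb; linarith
  rcases le_total 1 b with h' | h'
  · have h1 : min 1 b = 1 := min_eq_left h'
    calc min 1 (a+b) ≤ 1 := min_le_left _ _
    _ ≤ min 1 a + min 1 b := by rw [h1]; have := le_min zero_le_one ha; linarith
  · rw [min_eq_right h, min_eq_right h']
    exact min_le_right _ _

private lemma one_le_abs_sub' {m : ℕ} {x y : Fin m} (h : x ≠ y) :
    (1 : ℝ) ≤ |(x : ℝ) - (y : ℝ)| := by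
  have hxy : x.val ≠ y.val := fun h' => h (Fin.ext h')
  rcases Nat.lt_or_ge x.val y.val with h' | h'
  · rw [abs_sub_comm, abs_of_nonneg (sub_nonneg.mpr (by exact_mod_cast h'.le))]
    have hc : (x.val : ℝ) + 1 ≤ (y.val : ℝ) := by exact_mod_cast h'
    linarith
  · have h'' : y.val < x.val := by omega
    rw [abs_of_nonneg (sub_nonneg.mpr (by exact_mod_cast h''.le))]
    have hc : (y.val : ℝ) + 1 ≤ (x.val : ℝ) := by exact_mod_cast h''
    linarith

/-- The chain metric on `Fin (n+1)`: `dist i j = min 1 (|i - j| * ε)`. -/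
noncomputable def chainMetric (n : ℕ) (ε : ℝ) (hε : 0 < ε) : MetricSpace (Fin (n + 1)) :=
  letI : TopologicalSpace (Fin (n + 1)) := ⊥
  haveI : DiscreteTopology (Fin (n + 1)) := ⟨rfl⟩
  MetricSpace.ofDistTopology (fun i j => min 1 (|(i : ℝ) - j| * ε))
    (fun i => by simp)
    (fun i j => by
      show min 1 (|(i : ℝ) - j| * ε) = min 1 (|(j : ℝ) - i| * ε)
      rw [abs_sub_comm])
    (fun i j k => by
      show min 1 (|(i : ℝ) - k| * ε) ≤
        min 1 (|(i : ℝ) - j| * ε) + min 1 (|(j : ℝ) - k| * ε)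
      have h1 : |(i : ℝ) - k| * ε ≤ |(i : ℝ) - j| * ε + |(j : ℝ) - k| * ε := by
        rw [← add_mul]
        gcongr
        exact abs_sub_le _ _ _
      calc min 1 (|(i : ℝ) - k| * ε)
          ≤ min 1 (|(i : ℝ) - j| * ε + |(j : ℝ) - k| * ε) := min_le_min_left _ h1
        _ ≤ _ := min_one_add _ _ (by positivity) (by positivity))
    (fun s => by
      constructor
      · intro _ x hx
        refine ⟨min 1 ε, lt_min one_pos hε, fun y hy => ?_⟩
        by_contra hxy
        have hne : x ≠ y := fun h => hxy (h ▸ hx)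
        have h1 : (1 : ℝ) ≤ |(x : ℝ) - y| := one_le_abs_sub' hne
        have h2 : min 1 ε ≤ min 1 (|(x : ℝ) - y| * ε) := by
          apply le_min (min_le_left _ _)
          calc min 1 ε ≤ ε := min_le_right _ _
          _ ≤ |(x : ℝ) - y| * ε := by nlinarith
        exact absurd hy (not_lt.mpr h2)
      · intro _; exact isOpen_discrete s)
    (fun i j h => by
      by_contra hij
      have h1 : (1 : ℝ) ≤ |(i : ℝ) - j| := one_le_abs_sub' hij
      have h2 : 0 < min 1 (|(i : ℝ) - j| * ε) := lt_min one_pos (by nlinarith)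
      have h3 : min 1 (|(i : ℝ) - j| * ε) = 0 := h
      linarith)

lemma chainMetric_dist (n : ℕ) (ε : ℝ) (hε : 0 < ε) (i j : Fin (n + 1)) :
    @dist _ (chainMetric n ε hε).toDist i j = min 1 (|(i : ℝ) - j| * ε) := rfl

attribute [irreducible] chainMetric

theorem product_of_conjugates_moves_by_one (X : Type) [MetricSpace X]
    (hX : IsUrysohnOne X) (g : X ≃ᵢ X) (hg : g ≠ 1) :
    ∃ l : List (X ≃ᵢ X), (∀ k ∈ l, ∃ h : X ≃ᵢ X, k = h * g * h⁻¹) ∧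
      ∃ x : X, dist x (l.prod x) = 1 := by
  classical
  obtain ⟨a, ha⟩ : ∃ a : X, g a ≠ a := by
    by_contra h
    push_neg at h
    exact hg (IsometryEquiv.ext h)
  set ε : ℝ := dist a (g a) with hε_def
  have hε : 0 < ε := dist_pos.mpr (Ne.symm ha)
  have hε1 : ε ≤ 1 := hX.diam_le_one _ _
  obtain ⟨n, hnε⟩ : ∃ n : ℕ, 1 ≤ (n : ℝ) * ε := by
    obtain ⟨n, hn⟩ := exists_nat_ge (1 / ε)
    refine ⟨n, ?_⟩
    calc (1 : ℝ) = (1 / ε) * ε := by field_simp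
    _ ≤ (n : ℝ) * ε := by nlinarith
  letI : MetricSpace (Fin (n + 1)) := chainMetric n ε hε
  have hdist : ∀ i j : Fin (n + 1), dist i j = min 1 (|(i : ℝ) - j| * ε) :=
    chainMetric_dist n ε hε
  obtain ⟨f, hf⟩ := hX.universal (Fin (n + 1)) (fun i j => by rw [hdist]; exact min_le_left _ _)
  have step : ∀ m : ℕ, (hm : m < n) → ∃ k : X ≃ᵢ X, (∃ h : X ≃ᵢ X, k = h * g * h⁻¹) ∧
      k (f ⟨m, by omega⟩) = f ⟨m + 1, by omega⟩ := by
    intro m hm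
    set p := f ⟨m, by omega⟩ with hp_def
    set q := f ⟨m + 1, by omega⟩ with hq_def
    have hpq : dist p q = ε := by
      rw [hp_def, hq_def, hf.dist_eq, hdist]
      have habs : |((⟨m, by omega⟩ : Fin (n+1)) : ℝ) - ((⟨m+1, by omega⟩ : Fin (n+1)) : ℝ)|
          = 1 := by
        push_cast
        rw [abs_sub_comm]
        norm_num
      rw [habs, one_mul, min_eq_right hε1]
    have hcond : ∀ x ∈ ({a, g a} : Finset X), ∀ y ∈ ({a, g a} : Finset X),
        dist ((fun y => if y = a then p else q) x) ((fun y => if y = a then p else q) y)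
          = dist x y := by
      intro x hx y hy
      simp only [Finset.mem_insert, Finset.mem_singleton] at hx hy
      rcases hx with rfl | rfl <;> rcases hy with rfl | rfl <;>
        simp only [eq_self_iff_true, if_true, if_neg ha, dist_self]
      · exact hpq.trans hε_def
      · rw [dist_comm q p, dist_comm (g _) _]
        exact hpq.trans hε_def
    obtain ⟨h, hh⟩ := hX.homogeneous {a, g a} (fun y => if y = a then p else q) hcond
    have hha : h a = p := by
      have := hh a (by simp); simpa using this
    have hhga : h (g a) = q := by
      have := hh (g a) (by simp)
      rwa [if_neg ha] at this
    refine ⟨h * g * h⁻¹, ⟨h, rfl⟩, ?_⟩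
    have hinv : h⁻¹ p = a := by rw [← hha]; exact h.inv_apply_self a
    show (h * g * h⁻¹) p = q
    rw [IsometryEquiv.mul_apply, IsometryEquiv.mul_apply, hinv, hhga]
  have chain : ∀ m : ℕ, (hm : m ≤ n) → ∃ l : List (X ≃ᵢ X),
      (∀ k ∈ l, ∃ h : X ≃ᵢ X, k = h * g * h⁻¹) ∧
      l.prod (f ⟨0, by omega⟩) = f ⟨m, by omega⟩ := by
    intro m
    induction m with
    | zero => intro _; exact ⟨[], by simp, by simp⟩
    | succ m ih =>
      intro hm
      obtain ⟨l, hl, hlp⟩ := ih (by omega)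
      obtain ⟨k, hk, hkstep⟩ := step m (by omega)
      refine ⟨k :: l, ?_, ?_⟩
      · intro k' hk'
        rcases List.mem_cons.mp hk' with rfl | h
        · exact hk
        · exact hl k' h
      · rw [List.prod_cons, IsometryEquiv.mul_apply, hlp, hkstep]
  obtain ⟨l, hl, hlp⟩ := chain n le_rfl
  refine ⟨l, hl, f ⟨0, by omega⟩, ?_⟩
  rw [hlp, hf.dist_eq, hdist]
  have habs : |((⟨0, by omega⟩ : Fin (n+1)) : ℝ) - ((⟨n, by omega⟩ : Fin (n+1)) : ℝ)|
      = n := by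
    push_cast
    rw [abs_sub_comm]
    simp
  rw [habs, min_eq_left hnε]
end

section
/- Let g be an isometry of U_1 such that d(a, g(a)) = 1 for some point a. Then for every finite subset A of U_1 there exists a point x with d(x, A) = 1 and d(x, g(x)) ≥ 1/2, where d(x,A) denotes the minimum distance from x to points of A. -/
lemma urysohn_extension {X : Type} [MetricSpace X] (hX : IsUrysohnOne X)
    (S : Finset X) (f : X → ℝ)
    (h0 : ∀ u ∈ S, (1:ℝ)/2 ≤ f u) (h1 : ∀ u ∈ S, f u ≤ 1)
    (h2 : ∀ u ∈ S, ∀ v ∈ S, |f u - f v| ≤ dist u v) :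
    ∃ x : X, ∀ u ∈ S, dist x u = f u := by
  classical
  set Y := Option {u : X // u ∈ S} with hY
  let D : Y → Y → ℝ := fun y z =>
    match y, z with
    | some u, some v => dist u.1 v.1
    | some u, none => f u.1
    | none, some v => f v.1
    | none, none => 0
  have Dself : ∀ y : Y, D y y = 0 := by rintro (_|u) <;> simp [D]
  have Dcomm : ∀ y z : Y, D y z = D z y := by
    rintro (_|u) (_|v) <;> simp [D, dist_comm]
  have Dtri : ∀ x y z : Y, D x z ≤ D x y + D y z := by
    rintro (_|u) (_|v) (_|w)
    · show (0:ℝ) ≤ 0 + 0; norm_num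
    · show f w.1 ≤ 0 + f w.1; norm_num
    · show (0:ℝ) ≤ f v.1 + f v.1; linarith [h0 _ v.2]
    · show f w.1 ≤ f v.1 + dist v.1 w.1
      have := abs_le.1 (h2 _ v.2 _ w.2); linarith [this.1, this.2]
    · show f u.1 ≤ f u.1 + 0; norm_num
    · show dist u.1 w.1 ≤ f u.1 + f w.1
      linarith [hX.diam_le_one u.1 w.1, h0 _ u.2, h0 _ w.2]
    · show f u.1 ≤ dist u.1 v.1 + f v.1
      have := abs_le.1 (h2 _ u.2 _ v.2); linarith [this.1, this.2]
    · exact dist_triangle u.1 v.1 w.1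
  letI : MetricSpace Y :=
    { dist := D
      dist_self := Dself
      dist_comm := Dcomm
      dist_triangle := Dtri
      eq_of_dist_eq_zero := by
        rintro (_|u) (_|v) h <;> simp only [D] at h
        · rfl
        · exact absurd h (by have := h0 _ v.2; intro e; rw [e] at this; norm_num at this)
        · exact absurd h (by have := h0 _ u.2; intro e; rw [e] at this; norm_num at this)
        · exact congrArg some (Subtype.ext (by exact eq_of_dist_eq_zero h)) }
  have hdiam : ∀ y z : Y, dist y z ≤ 1 := by
    rintro (_|u) (_|v)
    · show (0:ℝ) ≤ 1; norm_num
    · show f v.1 ≤ 1; exact h1 _ v.2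
    · show f u.1 ≤ 1; exact h1 _ u.2
    · show dist u.1 v.1 ≤ 1; exact hX.diam_le_one _ _
  obtain ⟨φ, hφ⟩ := hX.universal Y hdiam
  -- map sending φ (some u) back to u
  let ψ : X → X := fun x =>
    if h : ∃ u : {u : X // u ∈ S}, φ (some u) = x then (h.choose : X) else x
  let T : Finset X := S.attach.image (fun u => φ (some u))
  have hψ : ∀ x ∈ T, ∀ y ∈ T, dist (ψ x) (ψ y) = dist x y := by
    intro x hx y hy
    simp only [T, Finset.mem_image] at hx hy
    obtain ⟨u, -, hu⟩ := hx
    obtain ⟨v, -, hv⟩ := hy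
    have hex : ∃ w : {u : X // u ∈ S}, φ (some w) = x := ⟨u, hu⟩
    have hey : ∃ w : {u : X // u ∈ S}, φ (some w) = y := ⟨v, hv⟩
    simp only [ψ, dif_pos hex, dif_pos hey]
    have e1 : φ (some hex.choose) = x := hex.choose_spec
    have e2 : φ (some hey.choose) = y := hey.choose_spec
    calc dist (hex.choose : X) (hey.choose : X)
        = dist (some hex.choose : Y) (some hey.choose : Y) := rfl
      _ = dist (φ (some hex.choose)) (φ (some hey.choose)) := (hφ.dist_eq _ _).symm
      _ = dist x y := by rw [e1, e2]
  obtain ⟨h, hh⟩ := hX.homogeneous T ψ hψ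
  refine ⟨h (φ none), ?_⟩
  intro u hu
  have hmem : φ (some ⟨u, hu⟩) ∈ T := by
    simp only [T, Finset.mem_image]
    exact ⟨⟨u, hu⟩, Finset.mem_attach _ _, rfl⟩
  have hex : ∃ w : {u : X // u ∈ S}, φ (some w) = φ (some ⟨u, hu⟩) := ⟨⟨u, hu⟩, rfl⟩
  have hval : ψ (φ (some ⟨u, hu⟩)) = u := by
    simp only [ψ, dif_pos hex]
    have := hex.choose_spec
    have : (some hex.choose : Y) = some ⟨u, hu⟩ := hφ.injective this
    rw [Option.some_inj] at this
    rw [this]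
  calc dist (h (φ none)) u
      = dist (h (φ none)) (ψ (φ (some ⟨u, hu⟩))) := by rw [hval]
    _ = dist (h (φ none)) (h (φ (some ⟨u, hu⟩))) := by rw [hh _ hmem]
    _ = dist (φ none) (φ (some ⟨u, hu⟩)) := h.dist_eq _ _
    _ = dist (none : Y) (some ⟨u, hu⟩ : Y) := hφ.dist_eq _ _
    _ = f u := rfl


theorem exists_far_point_moved (X : Type) [MetricSpace X]
    (hX : IsUrysohnOne X) (g : X ≃ᵢ X) (a : X) (ha : dist a (g a) = 1)
    (A : Finset X) (hA : A.Nonempty) :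
    ∃ x : X, A.inf' hA (fun y => dist x y) = 1 ∧ 1/2 ≤ dist x (g x) := by
  classical
  -- Stage 1: find a' with dist a' a = 1/2, dist a' (g a) = 1, dist a' b ≥ 1/2 for b ∈ A
  set S₁ : Finset X := insert a (insert (g a) A) with hS₁
  set f₁ : X → ℝ := fun u => max (1/2) (1 - dist (g a) u) with hf₁
  obtain ⟨a', ha'⟩ := urysohn_extension hX S₁ f₁
    (fun u _ => le_max_left _ _)
    (fun u _ => max_le (by norm_num) (by linarith [dist_nonneg (x := g a) (y := u)]))
    (by
      intro u _ v _
      have h := abs_max_sub_max_le_abs (1 - dist (g a) u) (1 - dist (g a) v) (1/2)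
      rw [max_comm (1 - dist (g a) u), max_comm (1 - dist (g a) v)] at h
      refine le_trans h ?_
      have : |(1 - dist (g a) u) - (1 - dist (g a) v)| = |dist v (g a) - dist u (g a)| := by
        rw [dist_comm v (g a), dist_comm u (g a)]; ring_nf
      rw [this]
      exact le_trans (abs_dist_sub_le v u (g a)) (by rw [dist_comm]))
  have haa : dist a' a = 1/2 := by
    have := ha' a (by simp [hS₁])
    rw [this, hf₁]
    simp only
    rw [dist_comm (g a) a, ha]
    norm_num
  have haga : dist a' (g a) = 1 := by
    have := ha' (g a) (by simp [hS₁])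
    rw [this, hf₁]
    simp only [dist_self]
    norm_num
  have hab : ∀ b ∈ A, 1/2 ≤ dist a' b := by
    intro b hb
    rw [ha' b (by simp [hS₁, hb])]
    exact le_max_left _ _
  have hmove : 1/2 ≤ dist a' (g a') := by
    have h1 : dist (g a') (g a) = dist a' a := g.isometry.dist_eq a' a
    have h2 : dist a' (g a) ≤ dist a' (g a') + dist (g a') (g a) := dist_triangle _ _ _
    rw [haga, h1, haa] at h2
    linarith
  -- Stage 2
  set S₂ : Finset X := insert a' (insert (g a') A) with hS₂
  set G : X → ℝ := fun u => if u ∈ A then 1 else max (1/2) (1 - dist (g a') u) with hG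
  have hGval : ∀ u, 1/2 ≤ G u ∧ G u ≤ 1 := by
    intro u
    rw [hG]; simp only
    split
    · norm_num
    · exact ⟨le_max_left _ _,
        max_le (by norm_num) (by linarith [dist_nonneg (x := g a') (y := u)])⟩
  have ha'notA : a' ∉ A := by
    intro h
    have := hab a' h
    simp at this
    linarith
  have hGa' : G a' = 1/2 := by
    rw [hG]; simp only [if_neg ha'notA]
    have : 1 - dist (g a') a' ≤ 1/2 := by
      have := hmove; rw [dist_comm]; linarith
    exact max_eq_left this
  have hGga' : G (g a') = 1 := by
    rw [hG]; simp only
    split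
    · rfl
    · rw [dist_self]; norm_num
  have key : ∀ u ∈ S₂, ∀ v ∈ S₂, G u - G v ≤ dist u v := by
    intro u hu v hv
    by_cases hvA : v ∈ A
    · have : G v = 1 := by rw [hG]; simp [if_pos hvA]
      rw [this]
      linarith [(hGval u).2, dist_nonneg (x := u) (y := v)]
    · rw [hS₂] at hv
      simp only [Finset.mem_insert] at hv
      rcases hv with rfl | rfl | hvA'
      · -- v = a'
        rw [hGa']
        rw [hS₂] at hu
        simp only [Finset.mem_insert] at hu
        rcases hu with rfl | rfl | huA
        · rw [hGa', dist_self]; norm_num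
        · rw [hGga']
          rw [dist_comm] at hmove
          linarith
        · have : G u = 1 := by rw [hG]; simp [if_pos huA]
          rw [this]
          rw [dist_comm]
          linarith [hab u huA]
      · -- v = g a'
        rw [hGga']
        linarith [(hGval u).2, dist_nonneg (x := u) (y := g a')]
      · exact absurd hvA' hvA
  obtain ⟨x, hx⟩ := urysohn_extension hX S₂ G
    (fun u _ => (hGval u).1) (fun u _ => (hGval u).2)
    (fun u hu v hv => abs_sub_le_iff.2
      ⟨key u hu v hv, by rw [dist_comm]; exact key v hv u hu⟩)
  have hxb : ∀ b ∈ A, dist x b = 1 := by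
    intro b hb
    rw [hx b (by simp [hS₂, hb]), hG]
    simp [if_pos hb]
  have hxa' : dist x a' = 1/2 := by
    rw [hx a' (by simp [hS₂]), hGa']
  have hxga' : dist x (g a') = 1 := by
    rw [hx (g a') (by simp [hS₂]), hGga']
  refine ⟨x, ?_, ?_⟩
  · apply le_antisymm
    · obtain ⟨b, hb⟩ := hA
      exact le_trans (Finset.inf'_le _ hb) (le_of_eq (hxb b hb))
    · exact Finset.le_inf' _ _ (fun b hb => le_of_eq (hxb b hb).symm)
  · have h1 : dist (g x) (g a') = dist x a' := g.isometry.dist_eq x a'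
    have h2 : dist x (g a') ≤ dist x (g x) + dist (g x) (g a') := dist_triangle _ _ _
    rw [hxga', h1, hxa'] at h2
    linarith
end

section
/- Let g be an isometry of U_1 and suppose that for some 0 ≤ d_0 ≤ 1, g moves every type of distance d_0 almost maximally. Then for every d ≤ d_0, g moves every type of distance d almost maximally or by distance 1 − 2(d_0 − d). -/
/-! ### Auxiliary lemmas -/

private lemma min1_eq_of_lt {x : ℝ} (h : min 1 x < 1) : min 1 x = x := by
  rcases le_total 1 x with h' | h'
  · rw [min_eq_left h'] at h; linarith
  · exact min_eq_right h'

private lemma abs_min_sub_min {a b c d C : ℝ} (h1 : |a - c| ≤ C) (h2 : |b - d| ≤ C) :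
    |min a b - min c d| ≤ C := by
  rw [abs_le] at h1 h2 ⊢
  constructor
  · rcases min_cases a b with ⟨h, _⟩ | ⟨h, _⟩ <;> rw [h] <;>
      linarith [min_le_left c d, min_le_right c d]
  · rcases min_cases c d with ⟨h, _⟩ | ⟨h, _⟩ <;> rw [h] <;>
      linarith [min_le_left a b, min_le_right a b]

private lemma abs_inf'_sub {α : Type} {s : Finset α} (H : s.Nonempty) (f h : α → ℝ) {C : ℝ}
    (hC : ∀ y ∈ s, |f y - h y| ≤ C) : |s.inf' H f - s.inf' H h| ≤ C := by
  rw [abs_le]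
  constructor
  · obtain ⟨i, hi, hieq⟩ := s.exists_mem_eq_inf' H f
    have h2 := Finset.inf'_le h hi
    have h3 := abs_le.mp (hC i hi)
    rw [hieq]
    linarith [h3.1, h3.2]
  · obtain ⟨i, hi, hieq⟩ := s.exists_mem_eq_inf' H h
    have h2 := Finset.inf'_le f hi
    have h3 := abs_le.mp (hC i hi)
    rw [hieq]
    linarith [h3.1, h3.2]

private noncomputable def auxDist {X : Type} [MetricSpace X] (S : Finset X) (f : X → ℝ) :
    Option {y : X // y ∈ S} → Option {y : X // y ∈ S} → ℝ
  | Option.some a, Option.some b => dist a.1 b.1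
  | Option.some a, Option.none => f a.1
  | Option.none, Option.some b => f b.1
  | Option.none, Option.none => 0

/-- Any finite consistent "Katětov" assignment of distances over a finite set is realised
by an actual point of the bounded Urysohn space. -/
private lemma exists_realization {X : Type} [MetricSpace X] (hX : IsUrysohnOne X)
    (S : Finset X) (f : X → ℝ)
    (h0 : ∀ y ∈ S, 0 ≤ f y) (h1 : ∀ y ∈ S, f y ≤ 1)
    (hA : ∀ y ∈ S, ∀ z ∈ S, |f y - f z| ≤ dist y z)
    (hB : ∀ y ∈ S, ∀ z ∈ S, dist y z ≤ f y + f z) :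
    ∃ x : X, ∀ y ∈ S, dist x y = f y := by
  classical
  by_cases hzero : ∃ y ∈ S, f y = 0
  · obtain ⟨s, hsS, hs0⟩ := hzero
    refine ⟨s, fun y hy => ?_⟩
    have h₁ := (abs_le.mp (hA s hsS y hy)).1
    have h₂ := hB s hsS y hy
    rw [hs0] at h₁ h₂
    exact le_antisymm (by linarith) (by linarith)
  · push_neg at hzero
    have hpos : ∀ y ∈ S, 0 < f y := fun y hy => lt_of_le_of_ne (h0 y hy) (Ne.symm (hzero y hy))
    letI : MetricSpace (Option {y : X // y ∈ S}) :=
      { dist := auxDist S f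
        dist_self := by rintro (_ | a) <;> simp [auxDist]
        dist_comm := by rintro (_ | a) (_ | b) <;> simp [auxDist, dist_comm]
        dist_triangle := by
          rintro (_ | a) (_ | b) (_ | c) <;> simp only [auxDist]
          · norm_num
          · have := h0 c.1 c.2; linarith
          · have := h0 b.1 b.2; linarith
          · have := abs_le.mp (hA b.1 b.2 c.1 c.2); linarith
          · have := h0 a.1 a.2; linarith
          · exact hB a.1 a.2 c.1 c.2
          · have := abs_le.mp (hA a.1 a.2 b.1 b.2); linarith
          · exact dist_triangle a.1 b.1 c.1
        eq_of_dist_eq_zero := by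
          rintro (_ | a) (_ | b) h <;> simp only [auxDist] at h
          · rfl
          · exact absurd h (ne_of_gt (hpos b.1 b.2))
          · exact absurd h (ne_of_gt (hpos a.1 a.2))
          · exact congrArg _ (Subtype.ext (by rwa [dist_eq_zero] at h)) }
    have hdd : ∀ u v : Option {y : X // y ∈ S}, dist u v = auxDist S f u v := fun _ _ => rfl
    obtain ⟨φ, hφ⟩ := hX.universal (Option {y : X // y ∈ S})
      (by rintro (_ | a) (_ | b) <;> rw [hdd] <;> simp only [auxDist]
          · norm_num
          · exact h1 b.1 b.2
          · exact h1 a.1 a.2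
          · exact hX.diam_le_one a.1 b.1)
    have hinj : Function.Injective φ := hφ.injective
    set F : X → X := fun z =>
      if h : ∃ u : {y : X // y ∈ S}, φ (Option.some u) = z then (h.choose).1 else z with hFdef
    have hFval : ∀ u : {y : X // y ∈ S}, F (φ (Option.some u)) = u.1 := by
      intro u
      have hex : ∃ u' : {y : X // y ∈ S}, φ (Option.some u') = φ (Option.some u) := ⟨u, rfl⟩
      rw [hFdef]
      simp only [dif_pos hex]
      exact congrArg Subtype.val (Option.some_injective _ (hinj hex.choose_spec))
    set s' : Finset X := S.attach.image (fun u : {y : X // y ∈ S} => φ (Option.some u)) with hs'def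
    have hiso : ∀ x ∈ s', ∀ y ∈ s', dist (F x) (F y) = dist x y := by
      intro x hx y hy
      obtain ⟨u, _, rfl⟩ := Finset.mem_image.mp hx
      obtain ⟨v, _, rfl⟩ := Finset.mem_image.mp hy
      rw [hFval u, hFval v, hφ.dist_eq]
      rfl
    obtain ⟨ψ, hψ⟩ := hX.homogeneous s' F hiso
    refine ⟨ψ (φ Option.none), fun y hy => ?_⟩
    have hmem : φ (Option.some ⟨y, hy⟩) ∈ s' :=
      Finset.mem_image_of_mem _ (S.mem_attach ⟨y, hy⟩)
    have h2 : ψ (φ (Option.some ⟨y, hy⟩)) = y := by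
      rw [hψ _ hmem, hFval ⟨y, hy⟩]
    calc dist (ψ (φ Option.none)) y
        = dist (ψ (φ Option.none)) (ψ (φ (Option.some ⟨y, hy⟩))) := by rw [h2]
      _ = dist (φ Option.none) (φ (Option.some ⟨y, hy⟩)) := ψ.dist_eq _ _
      _ = dist (Option.none : Option {y : X // y ∈ S}) (Option.some ⟨y, hy⟩) := hφ.dist_eq _ _
      _ = f y := rfl


theorem moves_almost_max_or_by_distance (X : Type) [MetricSpace X]
    (hX : IsUrysohnOne X) (g : X ≃ᵢ X) (d₀ : ℝ) (hd₀ : 0 ≤ d₀) (hd₀' : d₀ ≤ 1)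
    (hmax : ∀ (a : X) (S : Finset X) (hS : S.Nonempty),
      typeDist a S hS = d₀ → MovesAlmostMax g a S) :
    ∀ d ≤ d₀, ∀ (a : X) (S : Finset X) (hS : S.Nonempty), typeDist a S hS = d →
      MovesAlmostMax g a S ∨ MovesBy g a S (1 - 2 * (d₀ - d)) := by
  classical
  intro d hd a S hS htd
  simp only [typeDist] at htd
  have diam := hX.diam_le_one
  have hd0 : 0 ≤ d := by
    have h0' : (0:ℝ) ≤ S.inf' hS fun b => dist a b :=
      Finset.le_inf' hS _ (fun y _ => dist_nonneg)
    rw [htd] at h0'; exact h0'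
  have hdle : ∀ y ∈ S, d ≤ dist a y := by
    intro y hy
    rw [← htd]; exact Finset.inf'_le _ hy
  obtain ⟨y₀, hy₀S, hy₀⟩ := S.exists_mem_eq_inf' hS (fun b => dist a b)
  rw [htd] at hy₀
  set e := d₀ - d with he_def
  have he0 : 0 ≤ e := by rw [he_def]; linarith
  have he1 : e ≤ 1 := by rw [he_def]; linarith
  have hde : d + e = d₀ := by rw [he_def]; ring
  -- basic facts about p'(y) = min 1 (dist a y + e)
  have hp'ge : ∀ y : X, dist a y ≤ min 1 (dist a y + e) := fun y =>
    le_min (diam a y) (by linarith [dist_nonneg (x := a) (y := y)])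
  have hp'e : ∀ y : X, e ≤ min 1 (dist a y + e) := fun y =>
    le_min he1 (by linarith [dist_nonneg (x := a) (y := y)])
  have hp'0 : ∀ y : X, 0 ≤ min 1 (dist a y + e) := fun y => le_trans he0 (hp'e y)
  have hp'lip : ∀ y z : X, |min 1 (dist a y + e) - min 1 (dist a z + e)| ≤ dist y z := by
    intro y z
    apply abs_min_sub_min (by simpa using (dist_nonneg : (0:ℝ) ≤ dist y z))
    have h1 := abs_dist_sub_le y z a
    rw [dist_comm y a, dist_comm z a] at h1
    have h2 : dist a y + e - (dist a z + e) = dist a y - dist a z := by ring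
    rw [h2]; exact h1
  -- Stage 1: the extended type f₀ over B₁ = S ∪ g S
  set B₁ := S ∪ S.image (fun z => g z) with hB₁def
  have hB₁ : B₁.Nonempty := ⟨y₀, Finset.mem_union_left _ hy₀S⟩
  set f₀ : X → ℝ := fun u => min 1 (S.inf' hS fun y => min 1 (dist a y + e) + dist y u)
    with hf₀def
  have hI₀ : ∀ u : X, (0:ℝ) ≤ S.inf' hS fun y => min 1 (dist a y + e) + dist y u := by
    intro u
    exact Finset.le_inf' hS _ (fun y _ => add_nonneg (hp'0 y) dist_nonneg)
  have hf₀0 : ∀ u, 0 ≤ f₀ u := by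
    intro u; simp only [hf₀def]; exact le_min zero_le_one (hI₀ u)
  have hf₀1 : ∀ u, f₀ u ≤ 1 := by
    intro u; simp only [hf₀def]; exact min_le_left _ _
  have hf₀lip : ∀ u v : X, |f₀ u - f₀ v| ≤ dist u v := by
    intro u v
    simp only [hf₀def]
    apply abs_min_sub_min (by simpa using (dist_nonneg : (0:ℝ) ≤ dist u v))
    apply abs_inf'_sub
    intro y _
    have h2 : min 1 (dist a y + e) + dist y u - (min 1 (dist a y + e) + dist y v)
        = dist y u - dist y v := by ring
    rw [h2]
    have h1 := abs_dist_sub_le u v y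
    rw [dist_comm u y, dist_comm v y] at h1
    exact h1
  have hf₀sum : ∀ u v : X, dist u v ≤ f₀ u + f₀ v := by
    intro u v
    simp only [hf₀def]
    rcases min_cases (1:ℝ) (S.inf' hS fun y => min 1 (dist a y + e) + dist y u) with
      ⟨h1, _⟩ | ⟨h1, _⟩
    · rw [h1]; linarith [diam u v, le_min zero_le_one (hI₀ v)]
    · rw [h1]
      rcases min_cases (1:ℝ) (S.inf' hS fun y => min 1 (dist a y + e) + dist y v) with
        ⟨h2, _⟩ | ⟨h2, _⟩
      · rw [h2]; linarith [diam u v, hI₀ u]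
      · rw [h2]
        obtain ⟨y, hyS, hy⟩ := S.exists_mem_eq_inf' hS
          (fun y => min 1 (dist a y + e) + dist y u)
        obtain ⟨z, hzS, hz⟩ := S.exists_mem_eq_inf' hS
          (fun y => min 1 (dist a y + e) + dist y v)
        rw [hy, hz]
        have t1 : dist u v ≤ dist u y + dist y z + dist z v := dist_triangle4 u y z v
        have t2 : dist y z ≤ dist a y + dist a z := by
          have t3 := dist_triangle y a z
          rw [dist_comm y a] at t3
          linarith
        linarith [hp'ge y, hp'ge z, dist_comm u y, dist_comm v z]
  obtain ⟨a₁, ha₁⟩ := exists_realization hX B₁ f₀ (fun y _ => hf₀0 y) (fun y _ => hf₀1 y)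
    (fun y _ z _ => hf₀lip y z) (fun y _ z _ => hf₀sum y z)
  have hf₀S : ∀ y ∈ S, f₀ y = min 1 (dist a y + e) := by
    intro y hy
    simp only [hf₀def]
    apply le_antisymm
    · calc min 1 (S.inf' hS fun z => min 1 (dist a z + e) + dist z y)
          ≤ S.inf' hS fun z => min 1 (dist a z + e) + dist z y := min_le_right _ _
        _ ≤ min 1 (dist a y + e) + dist y y := Finset.inf'_le _ hy
        _ = min 1 (dist a y + e) := by simp
    · apply le_min (min_le_left _ _)
      apply Finset.le_inf'
      intro z hz
      have h2 := (abs_le.mp (hp'lip y z)).2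
      linarith [dist_comm y z]
  have htd₁ : typeDist a₁ B₁ hB₁ = d₀ := by
    simp only [typeDist]
    apply le_antisymm
    · have h1 : B₁.inf' hB₁ (fun b => dist a₁ b) ≤ dist a₁ y₀ :=
        Finset.inf'_le _ (Finset.mem_union_left _ hy₀S)
      rw [ha₁ y₀ (Finset.mem_union_left _ hy₀S), hf₀S y₀ hy₀S, ← hy₀, hde,
        min_eq_right hd₀'] at h1
      exact h1
    · apply Finset.le_inf'
      intro u hu
      rw [ha₁ u hu]
      simp only [hf₀def]
      refine le_min hd₀' ?_
      apply Finset.le_inf'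
      intro z hz
      have h3 : min 1 (d + e) ≤ min 1 (dist a z + e) :=
        min_le_min le_rfl (by linarith [hdle z hz])
      rw [hde, min_eq_right hd₀'] at h3
      linarith [dist_nonneg (x := z) (y := u)]
  obtain ⟨b', hRb', hIb'⟩ := hmax a₁ B₁ hB₁ htd₁
  have hb'B : ∀ u ∈ B₁, dist b' u = f₀ u := fun u hu => (hRb' u hu).trans (ha₁ u hu)
  have hb'S : ∀ y ∈ S, dist b' y = min 1 (dist a y + e) := fun y hy =>
    (hb'B y (Finset.mem_union_left _ hy)).trans (hf₀S y hy)
  have hb'g : ∀ z ∈ S, dist b' (g z) = f₀ (g z) := fun z hz =>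
    hb'B _ (Finset.mem_union_right _ (Finset.mem_image_of_mem _ hz))
  -- Stage 2: realise the type f1 over T = {b', g⁻¹ b'} ∪ S
  set f1 : X → ℝ := fun u =>
    min 1 (min (S.inf' hS fun y => dist a y + dist y u) (e + dist b' u)) with hf1def
  have hJ0 : ∀ u : X, (0:ℝ) ≤ S.inf' hS fun y => dist a y + dist y u := fun u =>
    Finset.le_inf' hS _ (fun y _ => add_nonneg dist_nonneg dist_nonneg)
  have hf10 : ∀ u, 0 ≤ f1 u := by
    intro u; simp only [hf1def]
    exact le_min zero_le_one (le_min (hJ0 u) (add_nonneg he0 dist_nonneg))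
  have hf11 : ∀ u, f1 u ≤ 1 := by
    intro u; simp only [hf1def]; exact min_le_left _ _
  have hf1lip : ∀ u v : X, |f1 u - f1 v| ≤ dist u v := by
    intro u v
    simp only [hf1def]
    apply abs_min_sub_min (by simpa using (dist_nonneg : (0:ℝ) ≤ dist u v))
    apply abs_min_sub_min
    · apply abs_inf'_sub
      intro y _
      have h2 : dist a y + dist y u - (dist a y + dist y v) = dist y u - dist y v := by ring
      rw [h2]
      have h1 := abs_dist_sub_le u v y
      rw [dist_comm u y, dist_comm v y] at h1
      exact h1
    · have h2 : e + dist b' u - (e + dist b' v) = dist b' u - dist b' v := by ring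
      rw [h2]
      have h1 := abs_dist_sub_le u v b'
      rw [dist_comm u b', dist_comm v b'] at h1
      exact h1
  have hf1sum : ∀ u v : X, dist u v ≤ f1 u + f1 v := by
    intro u v
    simp only [hf1def]
    rcases min_cases (1:ℝ)
        (min (S.inf' hS fun y => dist a y + dist y u) (e + dist b' u)) with ⟨h1, _⟩ | ⟨h1, _⟩
    · rw [h1]
      linarith [diam u v,
        le_min zero_le_one (le_min (hJ0 v) (add_nonneg he0 (dist_nonneg (x := b') (y := v))))]
    · rw [h1]
      rcases min_cases (1:ℝ)
          (min (S.inf' hS fun y => dist a y + dist y v) (e + dist b' v)) with ⟨h2, _⟩ | ⟨h2, _⟩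
      · rw [h2]
        linarith [diam u v, le_min (hJ0 u) (add_nonneg he0 (dist_nonneg (x := b') (y := u)))]
      · rw [h2]
        rcases min_cases (S.inf' hS fun y => dist a y + dist y u) (e + dist b' u) with
          ⟨h3, _⟩ | ⟨h3, _⟩ <;>
        rcases min_cases (S.inf' hS fun y => dist a y + dist y v) (e + dist b' v) with
          ⟨h4, _⟩ | ⟨h4, _⟩ <;> rw [h3, h4]
        · obtain ⟨y, hyS, hy⟩ := S.exists_mem_eq_inf' hS (fun y => dist a y + dist y u)
          obtain ⟨z, hzS, hz⟩ := S.exists_mem_eq_inf' hS (fun y => dist a y + dist y v)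
          rw [hy, hz]
          have t1 : dist u v ≤ dist u y + dist y z + dist z v := dist_triangle4 u y z v
          have t2 : dist y z ≤ dist a y + dist a z := by
            have t3 := dist_triangle y a z
            rw [dist_comm y a] at t3
            linarith
          linarith [dist_comm u y, dist_comm v z]
        · obtain ⟨y, hyS, hy⟩ := S.exists_mem_eq_inf' hS (fun y => dist a y + dist y u)
          rw [hy]
          have t1 : dist u v ≤ dist u y + dist y b' + dist b' v := dist_triangle4 u y b' v
          have t2 : dist y b' ≤ dist a y + e := by
            have t3 := hb'S y hyS
            have t4 := min_le_right (1:ℝ) (dist a y + e)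
            rw [← t3] at t4
            linarith [dist_comm y b']
          linarith [dist_comm u y]
        · obtain ⟨z, hzS, hz⟩ := S.exists_mem_eq_inf' hS (fun y => dist a y + dist y v)
          rw [hz]
          have t1 : dist u v ≤ dist u b' + dist b' z + dist z v := dist_triangle4 u b' z v
          have t2 : dist b' z ≤ dist a z + e := by
            have t3 := hb'S z hzS
            have t4 := min_le_right (1:ℝ) (dist a z + e)
            rw [← t3] at t4
            linarith
          linarith [dist_comm u b', dist_comm v z]
        · have t1 : dist u v ≤ dist u b' + dist b' v := dist_triangle u b' v
          linarith [dist_comm u b']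
  obtain ⟨b, hb⟩ := exists_realization hX (insert b' (insert (g.symm b') S)) f1
    (fun y _ => hf10 y) (fun y _ => hf11 y) (fun y _ z _ => hf1lip y z)
    (fun y _ z _ => hf1sum y z)
  have hfS1 : ∀ y ∈ S, f1 y = dist a y := by
    intro y hy
    simp only [hf1def]
    apply le_antisymm
    · calc min 1 (min (S.inf' hS fun z => dist a z + dist z y) (e + dist b' y))
          ≤ min (S.inf' hS fun z => dist a z + dist z y) (e + dist b' y) := min_le_right _ _
        _ ≤ S.inf' hS fun z => dist a z + dist z y := min_le_left _ _
        _ ≤ dist a y + dist y y := Finset.inf'_le _ hy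
        _ = dist a y := by simp
    · refine le_min (diam a y) (le_min ?_ ?_)
      · apply Finset.le_inf'
        intro z hz
        have := dist_triangle a z y
        linarith
      · have t1 := hb'S y hy
        have t2 := hp'ge y
        rw [← t1] at t2
        linarith
  have hbS : Realises b a S := by
    intro y hy
    rw [hb y (Finset.mem_insert_of_mem (Finset.mem_insert_of_mem hy))]
    exact hfS1 y hy
  have hf1b' : f1 b' = e := by
    simp only [hf1def]
    apply le_antisymm
    · calc min 1 (min (S.inf' hS fun z => dist a z + dist z b') (e + dist b' b'))
          ≤ min (S.inf' hS fun z => dist a z + dist z b') (e + dist b' b') := min_le_right _ _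
        _ ≤ e + dist b' b' := min_le_right _ _
        _ = e := by simp
    · refine le_min he1 (le_min ?_ (by simp))
      apply Finset.le_inf'
      intro z hz
      have t1 := hb'S z hz
      have t2 := hp'e z
      rw [← t1] at t2
      linarith [dist_nonneg (x := a) (y := z), dist_comm z b']
  have hbb' : dist b b' = e := by
    rw [hb b' (Finset.mem_insert_self _ _)]
    exact hf1b'
  have hsymm2 : ∀ y : X, dist y (g.symm b') = dist b' (g y) := by
    intro y
    calc dist y (g.symm b') = dist (g y) (g (g.symm b')) := (g.dist_eq _ _).symm
      _ = dist (g y) b' := by rw [g.apply_symm_apply]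
      _ = dist b' (g y) := dist_comm _ _
  set A := S.inf' hS (fun y => dist a y + dist y (g.symm b')) with hAdef
  have hμ : dist b (g.symm b') = min 1 (min A (e + dist b' (g b'))) := by
    rw [hb (g.symm b') (Finset.mem_insert_of_mem (Finset.mem_insert_self _ _))]
    simp only [hf1def]
    rw [← hAdef, hsymm2 b']
  have L1 : min 1 (min A (e + dist b' (g b'))) - e ≤ dist b (g b) := by
    have t1 : dist (g b) b' ≤ dist (g b) b + dist b b' := dist_triangle _ _ _
    have t2 : dist (g b) b' = dist b (g.symm b') := by
      calc dist (g b) b' = dist (g b) (g (g.symm b')) := by rw [g.apply_symm_apply]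
        _ = dist b (g.symm b') := g.dist_eq _ _
    rw [t2, hμ, hbb', dist_comm (g b) b] at t1
    linarith
  rcases le_or_gt 1 (min A (e + dist b' (g b'))) with hc1 | hc1
  · -- the capped case: g moves the type by at least 1 - e ≥ 1 - 2e
    right
    refine ⟨b, hbS, ?_⟩
    rw [min_eq_left hc1] at L1
    linarith
  · have hmin : min 1 (min A (e + dist b' (g b'))) = min A (e + dist b' (g b')) :=
      min_eq_right hc1.le
    rcases le_or_gt A (e + dist b' (g b')) with hc2 | hc2
    · -- case γ : the inf-branch is the minimum
      have hAeq : min A (e + dist b' (g b')) = A := min_eq_left hc2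
      have hA1 : A < 1 := by rw [hAeq] at hc1; exact hc1
      have c5 : A - e ≤ dist b (g b) := by rw [hmin, hAeq] at L1; exact L1
      obtain ⟨z₂, hz₂S, hz₂⟩ := S.exists_mem_eq_inf' hS
        (fun y => dist a y + dist y (g.symm b'))
      rw [← hAdef] at hz₂
      rw [hsymm2 z₂, hb'g z₂ hz₂S] at hz₂
      have hf₀z : f₀ (g z₂) < 1 := by
        have := dist_nonneg (x := a) (y := z₂)
        linarith
      have hI2 : f₀ (g z₂) = S.inf' hS fun y => min 1 (dist a y + e) + dist y (g z₂) := by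
        have h5 : min 1 (S.inf' hS fun y => min 1 (dist a y + e) + dist y (g z₂)) < 1 := by
          simp only [hf₀def] at hf₀z; exact hf₀z
        simp only [hf₀def]
        exact min1_eq_of_lt h5
      obtain ⟨y₄, hy₄S, hy₄⟩ := S.exists_mem_eq_inf' hS
        (fun y => min 1 (dist a y + e) + dist y (g z₂))
      have hp4 : min 1 (dist a y₄ + e) = dist a y₄ + e := by
        apply min1_eq_of_lt
        have h5 : min 1 (dist a y₄ + e) ≤ f₀ (g z₂) := by
          rw [hI2, hy₄]
          linarith [dist_nonneg (x := y₄) (y := g z₂)]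
        linarith
      have key : f₀ (g z₂) = dist a y₄ + e + dist y₄ (g z₂) := by rw [hI2, hy₄, hp4]
      have c1 : dist b (g b) ≤ dist b y₄ + dist y₄ (g b) := dist_triangle _ _ _
      have c2 : dist b y₄ = dist a y₄ := hbS y₄ hy₄S
      have c3 : dist y₄ (g b) ≤ dist y₄ (g z₂) + dist (g z₂) (g b) := dist_triangle _ _ _
      have c4 : dist (g z₂) (g b) = dist a z₂ := by
        rw [g.dist_eq, dist_comm]; exact hbS z₂ hz₂S
      have heq : dist b (g b) = dist b y₄ + dist y₄ (g b) :=
        le_antisymm c1 (by linarith)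
      left
      refine ⟨b, hbS, ?_⟩
      intro u hu v hv _
      rw [Set.mem_singleton_iff] at hu hv
      subst hu; subst hv
      exact ⟨y₄, Finset.mem_coe.mpr hy₄S, heq⟩
    · -- case α : the b'-branch is the minimum; use independence of b'
      have hAeq : min A (e + dist b' (g b')) = e + dist b' (g b') := min_eq_right hc2.le
      have hD1 : dist b' (g b') < 1 := by
        rw [hAeq] at hc1
        linarith
      have c5 : dist b' (g b') ≤ dist b (g b) := by
        rw [hmin, hAeq] at L1; linarith
      obtain ⟨w, hwB, hweq⟩ := hIb' b' rfl (g b') rfl hD1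
      rcases Finset.mem_union.mp (Finset.mem_coe.mp hwB) with hwS | hwI
      · -- witness in S
        have hb'w : dist b' w = min 1 (dist a w + e) := hb'S w hwS
        have hp : min 1 (dist a w + e) = dist a w + e := by
          apply min1_eq_of_lt
          have h5 : dist b' w ≤ dist b' (g b') := by
            rw [hweq]; linarith [dist_nonneg (x := w) (y := g b')]
          rw [hb'w] at h5
          linarith
        have c1 : dist b (g b) ≤ dist b w + dist w (g b) := dist_triangle _ _ _
        have c2 : dist b w = dist a w := hbS w hwS
        have c3 : dist w (g b) ≤ dist w (g b') + dist (g b') (g b) := dist_triangle _ _ _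
        have c4 : dist (g b') (g b) = e := by
          rw [g.dist_eq, dist_comm]; exact hbb'
        have c6 : dist w (g b') = dist b' (g b') - (dist a w + e) := by
          rw [hweq, hb'w, hp]; ring
        have heq : dist b (g b) = dist b w + dist w (g b) :=
          le_antisymm c1 (by linarith)
        left
        refine ⟨b, hbS, ?_⟩
        intro u hu v hv _
        rw [Set.mem_singleton_iff] at hu hv
        subst hu; subst hv
        exact ⟨w, Finset.mem_coe.mpr hwS, heq⟩
      · -- witness in g S
        obtain ⟨z₁, hz₁S, rfl⟩ := Finset.mem_image.mp hwI
        have h1 : dist b' (g z₁) = f₀ (g z₁) := hb'g z₁ hz₁S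
        have h2 : dist (g z₁) (g b') = min 1 (dist a z₁ + e) := by
          rw [g.dist_eq, dist_comm]; exact hb'S z₁ hz₁S
        have hf₀1' : f₀ (g z₁) < 1 := by
          have h5 : f₀ (g z₁) ≤ dist b' (g b') := by
            rw [hweq, h1]
            linarith [dist_nonneg (x := g z₁) (y := g b')]
          linarith
        have hpz1 : min 1 (dist a z₁ + e) = dist a z₁ + e := by
          apply min1_eq_of_lt
          have h5 : min 1 (dist a z₁ + e) ≤ dist b' (g b') := by
            rw [hweq, h2]
            linarith [dist_nonneg (x := b') (y := g z₁)]
          linarith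
        have hI1 : f₀ (g z₁) = S.inf' hS fun y => min 1 (dist a y + e) + dist y (g z₁) := by
          have h5 : min 1 (S.inf' hS fun y => min 1 (dist a y + e) + dist y (g z₁)) < 1 := by
            simp only [hf₀def] at hf₀1'; exact hf₀1'
          simp only [hf₀def]
          exact min1_eq_of_lt h5
        obtain ⟨y₅, hy₅S, hy₅⟩ := S.exists_mem_eq_inf' hS
          (fun y => min 1 (dist a y + e) + dist y (g z₁))
        have hp5 : min 1 (dist a y₅ + e) = dist a y₅ + e := by
          apply min1_eq_of_lt
          have h5 : min 1 (dist a y₅ + e) ≤ f₀ (g z₁) := by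
            rw [hI1, hy₅]
            linarith [dist_nonneg (x := y₅) (y := g z₁)]
          linarith
        have key : f₀ (g z₁) = dist a y₅ + e + dist y₅ (g z₁) := by rw [hI1, hy₅, hp5]
        have c1 : dist b (g b) ≤ dist b y₅ + dist y₅ (g b) := dist_triangle _ _ _
        have c2 : dist b y₅ = dist a y₅ := hbS y₅ hy₅S
        have c3 : dist y₅ (g b) ≤ dist y₅ (g z₁) + dist (g z₁) (g b) := dist_triangle _ _ _
        have c4 : dist (g z₁) (g b) = dist a z₁ := by
          rw [g.dist_eq, dist_comm]; exact hbS z₁ hz₁S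
        have c7 : dist b' (g b') = dist a y₅ + e + dist y₅ (g z₁) + (dist a z₁ + e) := by
          rw [hweq, h1, h2, hpz1, key]
        have heq : dist b (g b) = dist b y₅ + dist y₅ (g b) :=
          le_antisymm c1 (by linarith)
        left
        refine ⟨b, hbS, ?_⟩
        intro u hu v hv _
        rw [Set.mem_singleton_iff] at hu hv
        subst hu; subst hv
        exact ⟨y₅, Finset.mem_coe.mpr hy₅S, heq⟩
end

section
/- For every ε > 0 there exists a non-identity isometry g of U_1 whose displacement is bounded by ε, i.e., d(x, g(x)) ≤ ε for all x ∈ U_1. Hence Isom(U_1) is not boundedly simple with uniform bounds independent of the element: there is no N such that every element of Isom(U_1) is a product of at most N conjugates of any given nontrivial g. -/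
namespace UryAux

variable {X : Type} [MetricSpace X]

/-- Katetov realization: any admissible abstract distance function over a finite set is realized
by a point of `X`. -/
theorem realize (hX : IsUrysohnOne X) (S : Finset X) (f : X → ℝ)
    (hpos : ∀ s ∈ S, 0 < f s) (hle1 : ∀ s ∈ S, f s ≤ 1)
    (hk1 : ∀ s ∈ S, ∀ t ∈ S, |f s - f t| ≤ dist s t)
    (hk2 : ∀ s ∈ S, ∀ t ∈ S, dist s t ≤ f s + f t) :
    ∃ b : X, ∀ s ∈ S, dist b s = f s := by
  classical
  set Y := Option {x : X // x ∈ S} with hY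
  let d : Y → Y → ℝ := fun o₁ o₂ =>
    match o₁, o₂ with
    | none, none => 0
    | none, some s => f s.1
    | some s, none => f s.1
    | some s, some t => dist s.1 t.1
  letI : MetricSpace Y :=
    { dist := d
      dist_self := by rintro (_ | s) <;> simp [d]
      dist_comm := by rintro (_ | s) (_ | t) <;> simp [d, dist_comm]
      dist_triangle := by
        rintro (_ | s) (_ | t) (_ | r) <;> simp only [d]
        · simp
        · simp
        · linarith [le_of_lt (hpos t.1 t.2)]
        · linarith [(abs_le.1 (hk1 t.1 t.2 r.1 r.2)).1]
        · simp
        · exact hk2 s.1 s.2 r.1 r.2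
        · linarith [(abs_le.1 (hk1 s.1 s.2 t.1 t.2)).2]
        · exact dist_triangle s.1 t.1 r.1
      eq_of_dist_eq_zero := by
        rintro (_ | s) (_ | t) h <;> simp only [d] at h
        · rfl
        · exact absurd h (ne_of_gt (hpos t.1 t.2))
        · exact absurd h (ne_of_gt (hpos s.1 s.2))
        · exact congrArg some (Subtype.ext (eq_of_dist_eq_zero h)) }
  have hdiam : ∀ y z : Y, dist y z ≤ 1 := by
    rintro (_ | s) (_ | t)
    · show (0:ℝ) ≤ 1; norm_num
    · exact hle1 t.1 t.2
    · exact hle1 s.1 s.2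
    · exact hX.diam_le_one s.1 t.1
  obtain ⟨e, he⟩ := hX.universal Y hdiam
  have heinj : Function.Injective e := he.injective
  -- the finite set of images of the `S`-part
  set T : Finset X := S.attach.image (fun s => e (some s)) with hT
  let F : X → X := fun x =>
    if h : ∃ s : {y : X // y ∈ S}, e (some s) = x then (h.choose : {y : X // y ∈ S}).1 else x
  have hF : ∀ s : {y : X // y ∈ S}, F (e (some s)) = s.1 := by
    intro s
    have h : ∃ s' : {y : X // y ∈ S}, e (some s') = e (some s) := ⟨s, rfl⟩
    have h2 := h.choose_spec
    have : h.choose = s := by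
      have := heinj h2
      exact Option.some_injective _ this
    simp only [F, dif_pos h, this]
  have hFiso : ∀ x ∈ T, ∀ y ∈ T, dist (F x) (F y) = dist x y := by
    intro x hx y hy
    simp only [hT, Finset.mem_image, Finset.mem_attach, true_and] at hx hy
    obtain ⟨s, _, rfl⟩ := hx
    obtain ⟨t, _, rfl⟩ := hy
    rw [hF s, hF t, he.dist_eq]
    rfl
  obtain ⟨g, hg⟩ := hX.homogeneous T F hFiso
  refine ⟨g (e none), ?_⟩
  intro s hs
  have hmem : e (some ⟨s, hs⟩) ∈ T := by
    simp only [hT, Finset.mem_image]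
    exact ⟨⟨s, hs⟩, Finset.mem_attach _ _, rfl⟩
  have : g (e (some ⟨s, hs⟩)) = s := by rw [hg _ hmem, hF]
  calc dist (g (e none)) s = dist (g (e none)) (g (e (some ⟨s, hs⟩))) := by rw [this]
    _ = dist (e none) (e (some ⟨s, hs⟩)) := g.dist_eq _ _
    _ = f s := by rw [he.dist_eq]; rfl


/-- One-step forward extension of a finite partial isometry with displacement `≤ ε`. -/
theorem ext_point (hX : IsUrysohnOne X) {ε : ℝ} (hε0 : 0 < ε) (hε1 : ε ≤ 1)
    (S : Finset X) (φ : X → X)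
    (hiso : ∀ s ∈ S, ∀ t ∈ S, dist (φ s) (φ t) = dist s t)
    (hdisp : ∀ s ∈ S, dist s (φ s) ≤ ε) (a : X) (ha : a ∉ S) :
    ∃ b : X, (∀ s ∈ S, dist b (φ s) = dist a s) ∧ dist a b ≤ ε := by
  classical
  rcases S.eq_empty_or_nonempty with rfl | hSne
  · exact ⟨a, by simp, by simp [le_of_lt hε0]⟩
  set r : ℝ := S.sup' hSne (fun s => |dist a s - dist a (φ s)|) with hr
  have hr_ge : ∀ s ∈ S, |dist a s - dist a (φ s)| ≤ r := fun s hs =>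
    Finset.le_sup' (fun s => |dist a s - dist a (φ s)|) hs
  have hr_le : ∀ s ∈ S, ∀ t ∈ S, |dist a s - dist a (φ s)| ≤ dist a t + dist a (φ t) := by
    intro s hs t ht
    rw [abs_le]
    constructor
    · have h1 : dist a (φ s) ≤ dist a (φ t) + dist (φ t) (φ s) := dist_triangle _ _ _
      have h2 : dist (φ t) (φ s) = dist t s := hiso t ht s hs
      have h3 : dist t s ≤ dist t a + dist a s := dist_triangle _ _ _
      have h4 : dist t a = dist a t := dist_comm _ _
      linarith
    · have h1 : dist a s ≤ dist a t + dist t s := dist_triangle _ _ _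
      have h2 : dist t s = dist (φ t) (φ s) := (hiso t ht s hs).symm
      have h3 : dist (φ t) (φ s) ≤ dist (φ t) a + dist a (φ s) := dist_triangle _ _ _
      have h4 : dist (φ t) a = dist a (φ t) := dist_comm _ _
      linarith
  have hrε : r ≤ ε := by
    apply Finset.sup'_le
    intro s hs
    calc |dist a s - dist a (φ s)| ≤ dist s (φ s) := by
          have := abs_dist_sub_le s (φ s) a
          rwa [dist_comm s a, dist_comm (φ s) a] at this
      _ ≤ ε := hdisp s hs
  have hr0 : 0 ≤ r := by
    obtain ⟨s, hs⟩ := hSne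
    exact le_trans (abs_nonneg _) (hr_ge s hs)
  rcases eq_or_lt_of_le hr0 with hreq | hrpos
  · -- r = 0 : take b = a
    refine ⟨a, fun s hs => ?_, by simp [le_of_lt hε0]⟩
    have := hr_ge s hs
    rw [← hreq] at this
    have h0 : dist a s - dist a (φ s) = 0 := abs_eq_zero.1 (le_antisymm this (abs_nonneg _))
    linarith
  -- r > 0
  set T : Finset X := insert a (S.image φ) with hT
  let f : X → ℝ := fun x => if h : ∃ s, s ∈ S ∧ φ s = x then dist a h.choose else r
  have hφinj : ∀ s ∈ S, ∀ t ∈ S, φ s = φ t → s = t := by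
    intro s hs t ht hst
    have : dist (φ s) (φ t) = 0 := by rw [hst, dist_self]
    rw [hiso s hs t ht] at this
    exact eq_of_dist_eq_zero this
  have hf1 : ∀ s ∈ S, f (φ s) = dist a s := by
    intro s hs
    have h : ∃ s', s' ∈ S ∧ φ s' = φ s := ⟨s, hs, rfl⟩
    have h2 := h.choose_spec
    have := hφinj _ h2.1 s hs h2.2
    simp only [f, dif_pos h, this]
  have hpos_da : ∀ s ∈ S, 0 < dist a s := by
    intro s hs
    rcases eq_or_lt_of_le (dist_nonneg (x := a) (y := s)) with h | h
    · exact absurd (eq_of_dist_eq_zero h.symm) (fun he => ha (he ▸ hs))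
    · exact h
  have hf2 : f a = r := by
    by_cases h : ∃ s, s ∈ S ∧ φ s = a
    · have h2 := h.choose_spec
      simp only [f, dif_pos h]
      have hs0 := h2.1
      have hφs0 : φ h.choose = a := h2.2
      -- r = dist a h.choose
      have hge : dist a h.choose ≤ r := by
        have := hr_ge _ hs0
        rwa [hφs0, dist_self, sub_zero, abs_of_nonneg dist_nonneg] at this
      have hle : r ≤ dist a h.choose := by
        apply Finset.sup'_le
        intro s hs
        have := hr_le s hs _ hs0
        rwa [hφs0, dist_self, add_zero] at this
      linarith
    · simp only [f, dif_neg h]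
  -- membership description of T
  have hmemT : ∀ x ∈ T, x = a ∨ ∃ s ∈ S, φ s = x := by
    intro x hx
    rw [hT, Finset.mem_insert] at hx
    rcases hx with rfl | hx
    · exact Or.inl rfl
    · right; rw [Finset.mem_image] at hx; obtain ⟨s, hs, rfl⟩ := hx; exact ⟨s, hs, rfl⟩
  -- key pairwise estimates against r
  have hkey1 : ∀ s ∈ S, |r - dist a s| ≤ dist a (φ s) := by
    intro s hs
    rw [abs_le]
    constructor
    · linarith [(abs_le.1 (hr_ge s hs)).2]
    · have : r ≤ dist a s + dist a (φ s) :=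
        Finset.sup'_le _ _ (fun s' hs' => hr_le s' hs' s hs)
      linarith
  have hkey2 : ∀ s ∈ S, dist a (φ s) ≤ r + dist a s := by
    intro s hs
    linarith [(abs_le.1 (hr_ge s hs)).1]
  have haT : a ∈ T := Finset.mem_insert_self _ _
  have hφT : ∀ s ∈ S, φ s ∈ T := fun s hs =>
    Finset.mem_insert_of_mem (Finset.mem_image_of_mem φ hs)
  obtain ⟨b, hb⟩ := realize hX T f
    (by
      intro x hx
      rcases hmemT x hx with rfl | ⟨s, hs, rfl⟩
      · rw [hf2]; exact hrpos
      · rw [hf1 s hs]; exact hpos_da s hs)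
    (by
      intro x hx
      rcases hmemT x hx with rfl | ⟨s, hs, rfl⟩
      · rw [hf2]; linarith
      · rw [hf1 s hs]; exact hX.diam_le_one a s)
    (by
      intro x hx y hy
      rcases hmemT x hx with hxa | ⟨s, hs, hxs⟩ <;> rcases hmemT y hy with hya | ⟨t, ht, hyt⟩
      · rw [hxa, hya]; simp
      · rw [hxa, ← hyt, hf2, hf1 t ht]
        exact hkey1 t ht
      · rw [hya, ← hxs, hf2, hf1 s hs, abs_sub_comm, dist_comm (φ s) a]
        exact hkey1 s hs
      · rw [← hxs, ← hyt, hf1 s hs, hf1 t ht, hiso s hs t ht]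
        have := abs_dist_sub_le s t a
        rwa [dist_comm s a, dist_comm t a] at this)
    (by
      intro x hx y hy
      rcases hmemT x hx with hxa | ⟨s, hs, hxs⟩ <;> rcases hmemT y hy with hya | ⟨t, ht, hyt⟩
      · rw [hxa, hya, hf2]; simp; linarith
      · rw [hxa, ← hyt, hf2, hf1 t ht]
        exact hkey2 t ht
      · rw [hya, ← hxs, hf2, hf1 s hs, dist_comm (φ s) a]
        linarith [hkey2 s hs]
      · rw [← hxs, ← hyt, hf1 s hs, hf1 t ht, hiso s hs t ht]
        calc dist s t ≤ dist s a + dist a t := dist_triangle _ _ _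
          _ = dist a s + dist a t := by rw [dist_comm s a])
  refine ⟨b, fun s hs => ?_, ?_⟩
  · rw [hb (φ s) (hφT s hs), hf1 s hs]
  · calc dist a b = dist b a := dist_comm _ _
      _ = r := by rw [hb a haT, hf2]
      _ ≤ ε := hrε

/-- A finite partial isometry with displacement at most `ε`. -/
structure PI (X : Type) [MetricSpace X] (ε : ℝ) where
  S : Finset X
  φ : X → X
  iso : ∀ s ∈ S, ∀ t ∈ S, dist (φ s) (φ t) = dist s t
  disp : ∀ s ∈ S, dist s (φ s) ≤ ε

/-- `Q` extends `P`. -/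
def Ext {ε : ℝ} (P Q : PI X ε) : Prop := P.S ⊆ Q.S ∧ ∀ s ∈ P.S, Q.φ s = P.φ s

theorem Ext.refl {ε : ℝ} (P : PI X ε) : Ext P P := ⟨Finset.Subset.refl _, fun _ _ => rfl⟩

theorem Ext.trans {ε : ℝ} {P Q R : PI X ε} (h1 : Ext P Q) (h2 : Ext Q R) : Ext P R :=
  ⟨h1.1.trans h2.1, fun s hs => by rw [h2.2 s (h1.1 hs), h1.2 s hs]⟩

theorem extendF (hX : IsUrysohnOne X) {ε : ℝ} (hε0 : 0 < ε) (hε1 : ε ≤ 1)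
    (P : PI X ε) (a : X) : ∃ Q : PI X ε, Ext P Q ∧ a ∈ Q.S := by
  classical
  by_cases ha : a ∈ P.S
  · exact ⟨P, Ext.refl P, ha⟩
  obtain ⟨b, hb1, hb2⟩ := ext_point hX hε0 hε1 P.S P.φ P.iso P.disp a ha
  refine ⟨⟨insert a P.S, Function.update P.φ a b, ?_, ?_⟩, ⟨?_, ?_⟩, Finset.mem_insert_self _ _⟩
  · intro s hs t ht
    rcases Finset.mem_insert.1 hs with hsa | hs <;> rcases Finset.mem_insert.1 ht with hta | ht
    · rw [hsa, hta]; simp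
    · have hne : t ≠ a := fun h => ha (h ▸ ht)
      rw [hsa, Function.update_self, Function.update_of_ne hne, hb1 t ht]
    · have hne : s ≠ a := fun h => ha (h ▸ hs)
      rw [hta, Function.update_self, Function.update_of_ne hne, dist_comm (P.φ s) b,
        hb1 s hs, dist_comm s a]
    · have hne1 : s ≠ a := fun h => ha (h ▸ hs)
      have hne2 : t ≠ a := fun h => ha (h ▸ ht)
      rw [Function.update_of_ne hne1, Function.update_of_ne hne2]
      exact P.iso s hs t ht
  · intro s hs
    rcases Finset.mem_insert.1 hs with hsa | hs
    · rw [hsa, Function.update_self]; exact hsa ▸ hb2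
    · have hne : s ≠ a := fun h => ha (h ▸ hs)
      rw [Function.update_of_ne hne]
      exact P.disp s hs
  · exact Finset.subset_insert _ _
  · intro s hs
    exact Function.update_of_ne (show s ≠ a from fun h => ha (h ▸ hs)) _ _

theorem extendB (hX : IsUrysohnOne X) {ε : ℝ} (hε0 : 0 < ε) (hε1 : ε ≤ 1)
    (P : PI X ε) (a : X) : ∃ Q : PI X ε, Ext P Q ∧ ∃ w ∈ Q.S, Q.φ w = a := by
  classical
  by_cases ha : ∃ s ∈ P.S, P.φ s = a
  · exact ⟨P, Ext.refl P, ha⟩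
  have hφinj : ∀ s ∈ P.S, ∀ t ∈ P.S, P.φ s = P.φ t → s = t := by
    intro s hs t ht hst
    have : dist (P.φ s) (P.φ t) = 0 := by rw [hst, dist_self]
    rw [P.iso s hs t ht] at this
    exact eq_of_dist_eq_zero this
  set T : Finset X := P.S.image P.φ with hT
  let ψ : X → X := fun y => if h : ∃ s ∈ P.S, P.φ s = y then h.choose else y
  have hψ : ∀ s ∈ P.S, ψ (P.φ s) = s := by
    intro s hs
    have h : ∃ s' ∈ P.S, P.φ s' = P.φ s := ⟨s, hs, rfl⟩
    have h2 := h.choose_spec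
    simp only [ψ, dif_pos h]
    exact hφinj _ h2.1 s hs h2.2
  have hmemT : ∀ y ∈ T, ∃ s ∈ P.S, P.φ s = y := by
    intro y hy
    rw [hT, Finset.mem_image] at hy
    exact hy
  have hψiso : ∀ y ∈ T, ∀ z ∈ T, dist (ψ y) (ψ z) = dist y z := by
    intro y hy z hz
    obtain ⟨s, hs, rfl⟩ := hmemT y hy
    obtain ⟨t, ht, rfl⟩ := hmemT z hz
    rw [hψ s hs, hψ t ht, P.iso s hs t ht]
  have hψdisp : ∀ y ∈ T, dist y (ψ y) ≤ ε := by
    intro y hy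
    obtain ⟨s, hs, rfl⟩ := hmemT y hy
    rw [hψ s hs, dist_comm]
    exact P.disp s hs
  have haT : a ∉ T := fun h => ha (hmemT a h)
  obtain ⟨b, hb1, hb2⟩ := ext_point hX hε0 hε1 T ψ hψiso hψdisp a haT
  have hb1' : ∀ s ∈ P.S, dist b s = dist a (P.φ s) := by
    intro s hs
    have := hb1 (P.φ s) (Finset.mem_image_of_mem _ hs)
    rwa [hψ s hs] at this
  have hbS : b ∉ P.S := by
    intro hbs
    have := hb1' b hbs
    rw [dist_self] at this
    exact ha ⟨b, hbs, (eq_of_dist_eq_zero this.symm).symm⟩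
  refine ⟨⟨insert b P.S, Function.update P.φ b a, ?_, ?_⟩, ⟨Finset.subset_insert _ _,
    fun s hs => Function.update_of_ne (show s ≠ b from fun h => hbS (h ▸ hs)) _ _⟩,
    b, Finset.mem_insert_self _ _, Function.update_self b a P.φ⟩
  · intro s hs t ht
    rcases Finset.mem_insert.1 hs with hsb | hs <;> rcases Finset.mem_insert.1 ht with htb | ht
    · rw [hsb, htb]; simp
    · have hne : t ≠ b := fun h => hbS (h ▸ ht)
      rw [hsb, Function.update_self, Function.update_of_ne hne, ← hb1' t ht]
    · have hne : s ≠ b := fun h => hbS (h ▸ hs)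
      rw [htb, Function.update_self, Function.update_of_ne hne, dist_comm (P.φ s) a,
        ← hb1' s hs, dist_comm b s]
    · have hne1 : s ≠ b := fun h => hbS (h ▸ hs)
      have hne2 : t ≠ b := fun h => hbS (h ▸ ht)
      rw [Function.update_of_ne hne1, Function.update_of_ne hne2]
      exact P.iso s hs t ht
  · intro s hs
    rcases Finset.mem_insert.1 hs with hsb | hs
    · rw [hsb, Function.update_self, dist_comm]
      exact hsb ▸ hb2
    · have hne : s ≠ b := fun h => hbS (h ▸ hs)
      rw [Function.update_of_ne hne]
      exact P.disp s hs

theorem step (hX : IsUrysohnOne X) {ε : ℝ} (hε0 : 0 < ε) (hε1 : ε ≤ 1)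
    (P : PI X ε) (a : X) :
    ∃ Q : PI X ε, Ext P Q ∧ a ∈ Q.S ∧ ∃ w ∈ Q.S, Q.φ w = a := by
  obtain ⟨Q1, h1, ha1⟩ := extendF hX hε0 hε1 P a
  obtain ⟨Q2, h2, hw⟩ := extendB hX hε0 hε1 Q1 a
  exact ⟨Q2, h1.trans h2, h2.1 ha1, hw⟩


open Filter Topology in
theorem small_disp (hX : IsUrysohnOne X) (ε : ℝ) (hε : 0 < ε) :
    ∃ g : X ≃ᵢ X, g ≠ 1 ∧ ∀ x : X, dist x (g x) ≤ ε := by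
  classical
  set ε' : ℝ := min ε 1 with hε'
  have hε'0 : 0 < ε' := lt_min hε one_pos
  have hε'1 : ε' ≤ 1 := min_le_right _ _
  have hε'ε : ε' ≤ ε := min_le_left _ _
  haveI := hX.complete
  haveI := hX.separable
  haveI : Nonempty X := by
    obtain ⟨f, -⟩ := hX.universal PUnit (by intro y z; rw [Subsingleton.elim y z, dist_self]; norm_num)
    exact ⟨f PUnit.unit⟩
  obtain ⟨u, hu⟩ := TopologicalSpace.exists_dense_seq X
  set p : X := u 0 with hp
  obtain ⟨q, hq⟩ := realize hX {p} (fun _ => ε')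
    (fun s _ => hε'0) (fun s _ => hε'1)
    (by intro s hs t ht; rw [Finset.mem_singleton] at hs ht; rw [hs, ht]; simp)
    (by intro s hs t ht; rw [Finset.mem_singleton] at hs ht; rw [hs, ht]; simp; linarith)
  have hqp : dist q p = ε' := hq p (Finset.mem_singleton_self p)
  have hpq : p ≠ q := by
    intro h
    rw [← h, dist_self] at hqp
    exact absurd hqp.symm (ne_of_gt hε'0)
  set P0 : PI X ε' := ⟨{p}, fun _ => q, by
      intro s hs t ht
      rw [Finset.mem_singleton] at hs ht
      rw [hs, ht]; simp, by
      intro s hs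
      rw [Finset.mem_singleton] at hs
      rw [hs, dist_comm, hqp]⟩ with hP0
  set Pse : ℕ → PI X ε' :=
    fun n => Nat.rec P0 (fun n Pn => (step hX hε'0 hε'1 Pn (u n)).choose) n with hPse
  have hstep : ∀ n, Ext (Pse n) (Pse (n+1)) ∧ u n ∈ (Pse (n+1)).S ∧
      ∃ w ∈ (Pse (n+1)).S, (Pse (n+1)).φ w = u n :=
    fun n => (step hX hε'0 hε'1 (Pse n) (u n)).choose_spec
  have hext : ∀ m n, m ≤ n → Ext (Pse m) (Pse n) := by
    intro m n hmn
    induction n, hmn using Nat.le_induction with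
    | base => exact Ext.refl _
    | succ n hmn ih => exact ih.trans (hstep n).1
  have hpS : ∀ n, p ∈ (Pse n).S ∧ (Pse n).φ p = q := by
    intro n
    induction n with
    | zero => exact ⟨Finset.mem_singleton_self p, rfl⟩
    | succ n ih => exact ⟨(hstep n).1.1 ih.1, by rw [(hstep n).1.2 p ih.1, ih.2]⟩
  set v : ℕ → X := fun n => (Pse (n+1)).φ (u n) with hv
  set w : ℕ → X := fun n => (hstep n).2.2.choose with hw
  have hwspec : ∀ n, w n ∈ (Pse (n+1)).S ∧ (Pse (n+1)).φ (w n) = u n :=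
    fun n => (hstep n).2.2.choose_spec
  have huS : ∀ n N, n < N → u n ∈ (Pse N).S :=
    fun n N hn => (hext (n+1) N hn).1 (hstep n).2.1
  have hφu : ∀ n N, n < N → (Pse N).φ (u n) = v n :=
    fun n N hn => (hext (n+1) N hn).2 (u n) (hstep n).2.1
  have hwS : ∀ n N, n < N → w n ∈ (Pse N).S :=
    fun n N hn => (hext (n+1) N hn).1 (hwspec n).1
  have hφw : ∀ n N, n < N → (Pse N).φ (w n) = u n :=
    fun n N hn => by rw [(hext (n+1) N hn).2 (w n) (hwspec n).1, (hwspec n).2]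
  -- the key distance identities
  have A1 : ∀ m n, dist (v m) (v n) = dist (u m) (u n) := by
    intro m n
    set N := max m n + 1 with hN
    have hm : m < N := lt_of_le_of_lt (le_max_left m n) (Nat.lt_succ_self _)
    have hn : n < N := lt_of_le_of_lt (le_max_right m n) (Nat.lt_succ_self _)
    rw [← hφu m N hm, ← hφu n N hn]
    exact (Pse N).iso (u m) (huS m N hm) (u n) (huS n N hn)
  have A2 : ∀ n, dist (u n) (v n) ≤ ε' :=
    fun n => (Pse (n+1)).disp (u n) (hstep n).2.1
  have A3 : ∀ m n, dist (w m) (w n) = dist (u m) (u n) := by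
    intro m n
    set N := max m n + 1 with hN
    have hm : m < N := lt_of_le_of_lt (le_max_left m n) (Nat.lt_succ_self _)
    have hn : n < N := lt_of_le_of_lt (le_max_right m n) (Nat.lt_succ_self _)
    have := (Pse N).iso (w m) (hwS m N hm) (w n) (hwS n N hn)
    rw [hφw m N hm, hφw n N hn] at this
    exact this.symm
  have A4 : ∀ m n, dist (w m) (u n) = dist (u m) (v n) := by
    intro m n
    set N := max m n + 1 with hN
    have hm : m < N := lt_of_le_of_lt (le_max_left m n) (Nat.lt_succ_self _)
    have hn : n < N := lt_of_le_of_lt (le_max_right m n) (Nat.lt_succ_self _)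
    have := (Pse N).iso (w m) (hwS m N hm) (u n) (huS n N hn)
    rw [hφw m N hm, hφu n N hn] at this
    exact this.symm
  have A5 : ∀ m, dist (v m) q = dist (u m) p := by
    intro m
    have hm : m < m + 1 := Nat.lt_succ_self _
    have := (Pse (m+1)).iso (u m) (huS m (m+1) hm) p (hpS (m+1)).1
    rw [hφu m (m+1) hm, (hpS (m+1)).2] at this
    exact this
  -- approximation indices
  have hone : ∀ i : ℕ, (0:ℝ) < 1/(i+1) := fun i => by positivity
  set k : X → ℕ → ℕ := fun x i => (hu.exists_dist_lt x (hone i)).choose with hk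
  have hkspec : ∀ x i, dist x (u (k x i)) < 1/(i+1) :=
    fun x i => (hu.exists_dist_lt x (hone i)).choose_spec
  have htends : Tendsto (fun i : ℕ => 1/((i:ℝ)+1)) atTop (𝓝 0) :=
    tendsto_one_div_add_atTop_nhds_zero_nat
  have hconv : ∀ x, Tendsto (fun i => u (k x i)) atTop (𝓝 x) := by
    intro x
    rw [tendsto_iff_dist_tendsto_zero]
    apply squeeze_zero (fun i => dist_nonneg) (g := fun i : ℕ => 1/((i:ℝ)+1)) _ htends
    intro i
    rw [dist_comm]
    exact (hkspec x i).le
  -- generic limit construction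
  have main : ∀ z : ℕ → X, (∀ m n, dist (z m) (z n) = dist (u m) (u n)) →
      ∃ Z : X → X, ∀ x, Tendsto (fun i => z (k x i)) atTop (𝓝 (Z x)) := by
    intro z hz
    have hlim : ∀ x, ∃ y, Tendsto (fun i => z (k x i)) atTop (𝓝 y) := by
      intro x
      apply cauchySeq_tendsto_of_complete
      have hcu : CauchySeq (fun i => u (k x i)) := (hconv x).cauchySeq
      rw [Metric.cauchySeq_iff] at hcu ⊢
      intro δ hδ
      obtain ⟨N, hN⟩ := hcu δ hδ
      exact ⟨N, fun m hm n hn => by rw [hz (k x m) (k x n)]; exact hN m hm n hn⟩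
    exact ⟨fun x => (hlim x).choose, fun x => (hlim x).choose_spec⟩
  obtain ⟨G, hG⟩ := main v A1
  obtain ⟨H, hH⟩ := main w A3
  have heval : ∀ (z : ℕ → X) (Z : X → X),
      (∀ x, Tendsto (fun i => z (k x i)) atTop (𝓝 (Z x))) →
      ∀ (x c : X), (∀ m, dist (z m) c = dist (u m) x) → Z x = c := by
    intro z Z hZ x c hc
    refine tendsto_nhds_unique (hZ x) ?_
    rw [tendsto_iff_dist_tendsto_zero]
    have he : (fun i => dist (z (k x i)) c) = fun i => dist (u (k x i)) x :=
      funext fun i => hc _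
    rw [he]
    exact tendsto_iff_dist_tendsto_zero.1 (hconv x)
  have hGiso : ∀ x y, dist (G x) (G y) = dist x y := by
    intro x y
    have h1 := (hG x).dist (hG y)
    have h2 := (hconv x).dist (hconv y)
    have he : (fun i => dist (v (k x i)) (v (k y i))) = fun i => dist (u (k x i)) (u (k y i)) :=
      funext fun i => A1 _ _
    rw [he] at h1
    exact tendsto_nhds_unique h1 h2
  have hHiso : ∀ x y, dist (H x) (H y) = dist x y := by
    intro x y
    have h1 := (hH x).dist (hH y)
    have h2 := (hconv x).dist (hconv y)
    have he : (fun i => dist (w (k x i)) (w (k y i))) = fun i => dist (u (k x i)) (u (k y i)) :=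
      funext fun i => A3 _ _
    rw [he] at h1
    exact tendsto_nhds_unique h1 h2
  have hGw : ∀ n, G (w n) = u n := by
    intro n
    refine heval v G hG (w n) (u n) (fun m => ?_)
    rw [dist_comm (v m) (u n), dist_comm (u m) (w n), A4 n m]
  have hHv : ∀ n, H (v n) = u n := by
    intro n
    exact heval w H hH (v n) (u n) (fun m => A4 m n)
  have hHG : ∀ x, H (G x) = x := by
    intro x
    have hHcont : Continuous H := (Isometry.of_dist_eq hHiso).continuous
    have h2 : Tendsto (fun i => H (v (k x i))) atTop (𝓝 (H (G x))) :=
      ((hHcont.tendsto _).comp (hG x))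
    have he : (fun i => H (v (k x i))) = fun i => u (k x i) := funext fun i => hHv _
    rw [he] at h2
    exact tendsto_nhds_unique h2 (hconv x)
  have hGH : ∀ x, G (H x) = x := by
    intro x
    have hGcont : Continuous G := (Isometry.of_dist_eq hGiso).continuous
    have h2 : Tendsto (fun i => G (w (k x i))) atTop (𝓝 (G (H x))) :=
      ((hGcont.tendsto _).comp (hH x))
    have he : (fun i => G (w (k x i))) = fun i => u (k x i) := funext fun i => hGw _
    rw [he] at h2
    exact tendsto_nhds_unique h2 (hconv x)
  have hGp : G p = q := heval v G hG p q A5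
  refine ⟨⟨⟨G, H, hHG, hGH⟩, Isometry.of_dist_eq hGiso⟩, ?_, ?_⟩
  · intro h
    have : G p = p := by
      have := congrArg (fun e : X ≃ᵢ X => e p) h
      simpa using this
    rw [hGp] at this
    exact hpq this.symm
  · intro x
    have h1 := (hconv x).dist (hG x)
    have h2 : ∀ i, dist (u (k x i)) (v (k x i)) ≤ ε' := fun i => A2 _
    exact le_trans (le_of_tendsto h1 (Filter.Eventually.of_forall h2)) hε'ε


/-- Existence of an isometry moving a point at distance exactly 1. -/
theorem big_move (hX : IsUrysohnOne X) :
    ∃ (f : X ≃ᵢ X) (p : X), dist p (f p) = 1 := by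
  classical
  haveI : Nonempty X := by
    obtain ⟨f, -⟩ := hX.universal PUnit
      (by intro y z; rw [Subsingleton.elim y z, dist_self]; norm_num)
    exact ⟨f PUnit.unit⟩
  obtain ⟨p⟩ := ‹Nonempty X›
  obtain ⟨q, hq⟩ := realize hX {p} (fun _ => 1)
    (fun s _ => one_pos) (fun s _ => le_refl 1)
    (by intro s hs t ht; rw [Finset.mem_singleton] at hs ht; rw [hs, ht]; simp)
    (by intro s hs t ht; rw [Finset.mem_singleton] at hs ht; rw [hs, ht]; simp)
  have hqp : dist q p = 1 := hq p (Finset.mem_singleton_self p)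
  have hpq : p ≠ q := by
    intro h
    rw [← h, dist_self] at hqp
    norm_num at hqp
  set F : X → X := fun x => if x = p then q else if x = q then p else x with hF
  have hFp : F p = q := by simp [hF]
  have hFq : F q = p := by simp [hF, Ne.symm hpq]
  have hmem : ∀ x ∈ ({p, q} : Finset X), x = p ∨ x = q := by
    intro x hx
    rcases Finset.mem_insert.1 hx with h | h
    · exact Or.inl h
    · exact Or.inr (Finset.mem_singleton.1 h)
  obtain ⟨f, hf⟩ := hX.homogeneous {p, q} F (by
    intro x hx y hy
    rcases hmem x hx with rfl | rfl <;> rcases hmem y hy with h | h <;> rw [h]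
    · rw [hFp]; simp
    · rw [hFp, hFq, dist_comm]
    · rw [hFp, hFq, dist_comm]
    · rw [hFq]; simp)
  refine ⟨f, p, ?_⟩
  rw [hf p (Finset.mem_insert_self _ _), hFp, dist_comm p q, hqp]

theorem conj_disp {ε : ℝ} (g k : X ≃ᵢ X) (hg : ∀ x, dist x (g x) ≤ ε)
    (hk : IsConjOfOrInv g k) : ∀ x, dist x (k x) ≤ ε := by
  have hginv : ∀ x, dist x (g⁻¹ x) ≤ ε := by
    intro x
    have h := hg (g⁻¹ x)
    rwa [IsometryEquiv.apply_inv_self, dist_comm] at h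
  obtain ⟨h, hc | hc⟩ := hk <;> subst hc <;> intro x
  · calc dist x ((h * g * h⁻¹) x) = dist (h (h⁻¹ x)) (h (g (h⁻¹ x))) := by
          rw [IsometryEquiv.apply_inv_self]; rfl
      _ = dist (h⁻¹ x) (g (h⁻¹ x)) := h.dist_eq _ _
      _ ≤ ε := hg _
  · calc dist x ((h * g⁻¹ * h⁻¹) x) = dist (h (h⁻¹ x)) (h (g⁻¹ (h⁻¹ x))) := by
          rw [IsometryEquiv.apply_inv_self]; rfl
      _ = dist (h⁻¹ x) (g⁻¹ (h⁻¹ x)) := h.dist_eq _ _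
      _ ≤ ε := hginv _

theorem prod_disp {ε : ℝ} (hε : 0 ≤ ε) :
    ∀ l : List (X ≃ᵢ X), (∀ k ∈ l, ∀ x, dist x (k x) ≤ ε) →
      ∀ x : X, dist x (l.prod x) ≤ l.length * ε := by
  intro l
  induction l with
  | nil => intro _ x; simp
  | cons k l ih =>
    intro h x
    have h1 : dist x ((k :: l).prod x) ≤ dist x (l.prod x) + dist (l.prod x) (k (l.prod x)) := by
      rw [List.prod_cons, IsometryEquiv.mul_apply]
      exact dist_triangle _ _ _
    have h2 := ih (fun k' hk' => h k' (List.mem_cons_of_mem _ hk')) x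
    have h3 := h k List.mem_cons_self (l.prod x)
    calc dist x ((k :: l).prod x) ≤ l.length * ε + ε := by linarith
      _ = (k :: l).length * ε := by
          rw [List.length_cons]
          push_cast
          ring

end UryAux

theorem small_displacement_and_not_boundedly_simple (X : Type) [MetricSpace X]
    (hX : IsUrysohnOne X) :
    (∀ ε : ℝ, 0 < ε → ∃ g : X ≃ᵢ X, g ≠ 1 ∧ ∀ x : X, dist x (g x) ≤ ε) ∧
    ¬ ∃ N : ℕ, ∀ g : X ≃ᵢ X, g ≠ 1 → ∀ f : X ≃ᵢ X,
        ∃ l : List (X ≃ᵢ X), l.length ≤ N ∧ (∀ k ∈ l, IsConjOfOrInv g k) ∧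
          l.prod = f := by
  constructor
  · exact fun ε hε => UryAux.small_disp hX ε hε
  · rintro ⟨N, hN⟩
    have hε : (0:ℝ) < 1/(2*(N:ℝ)+2) := by positivity
    obtain ⟨g, hg1, hg2⟩ := UryAux.small_disp hX (1/(2*(N:ℝ)+2)) hε
    obtain ⟨f, p, hf⟩ := UryAux.big_move hX
    obtain ⟨l, hlen, hconj, hprod⟩ := hN g hg1 f
    have hdisp : ∀ k ∈ l, ∀ x, dist x (k x) ≤ 1/(2*(N:ℝ)+2) :=
      fun k hk => UryAux.conj_disp g k hg2 (hconj k hk)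
    have key := UryAux.prod_disp hε.le l hdisp p
    rw [hprod, hf] at key
    have hNl : (l.length : ℝ) ≤ N := Nat.cast_le.2 hlen
    have h1 : (1:ℝ) ≤ (N:ℝ) * (1/(2*(N:ℝ)+2)) :=
      le_trans key (mul_le_mul_of_nonneg_right hNl hε.le)
    have h2 : (N:ℝ) * (1/(2*(N:ℝ)+2)) < 1 := by
      rw [mul_one_div, div_lt_one (by positivity)]
      have : (0:ℝ) ≤ N := Nat.cast_nonneg N
      linarith
    linarith
end

section
/- In U_1, transitivity of independence holds: for finite sets B ⊆ B' and points/sets A, C, if A is independent from B' over B and A is independent from C over B', then A is independent from C over B. -/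
theorem indep_trans (X : Type) [MetricSpace X] (hX : IsUrysohnOne X)
    (A C : Set X) (B B' : Finset X) (hBB' : B ⊆ B')
    (h1 : Indep A (↑B) (↑B')) (h2 : Indep A (↑B') C) :
    Indep A (↑B) C := by
  intro a ha c hc hac
  obtain ⟨b', hb', hab'c⟩ := h2 a ha c hc hac
  have hab' : dist a b' < 1 := by
    have := dist_nonneg (x := b') (y := c)
    linarith
  obtain ⟨b, hb, habb'⟩ := h1 a ha b' hb' hab'
  refine ⟨b, hb, le_antisymm (dist_triangle a b c) ?_⟩
  have h1 := dist_triangle b b' c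
  have h2 := dist_triangle b' b c
  calc dist a b + dist b c ≤ dist a b + (dist b b' + dist b' c) := by linarith
    _ = dist a c := by rw [hab'c, habb']; ring
end

section
/- In U_1, existence of independent realisations holds: for every point a and finite sets B ⊆ C, there exists a point a' with the same type as a over B (i.e., d(a', b) = d(a, b) for all b ∈ B, and a' in the same orbit over B) such that a' is independent from C over B. -/
theorem exists_indep_realisation (X : Type) [MetricSpace X] (hX : IsUrysohnOne X)
    (a : X) (B C : Finset X) (hBC : B ⊆ C) :
    ∃ a' : X, (∀ b ∈ B, dist a' b = dist a b) ∧
      (∃ g : X ≃ᵢ X, (∀ b ∈ B, g b = b) ∧ g a = a') ∧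
      Indep {a'} (↑B) (↑C) := by
  by_cases haB : a ∈ B
  · refine ⟨a, fun b _ => rfl, ⟨IsometryEquiv.refl X, fun b _ => rfl, rfl⟩, ?_⟩
    rintro x hx c hc _
    rw [Set.mem_singleton_iff] at hx
    exact ⟨a, haB, by simp [hx]⟩
  -- main case : a ∉ B
  set ρ : X → ℝ := fun c => if h : B.Nonempty then
      min 1 (B.inf' h fun b => dist a b + dist b c) else 1 with hρ
  have hρ_le_one : ∀ c, ρ c ≤ 1 := by
    intro c; simp only [hρ]; split
    · exact min_le_left _ _
    · exact le_refl 1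
  have hρ_ge : ∀ c, dist a c ≤ ρ c := by
    intro c; simp only [hρ]; split
    · exact le_min (hX.diam_le_one a c)
        (Finset.le_inf' _ _ fun b _ => dist_triangle a b c)
    · exact hX.diam_le_one a c
  have hρ_pos : ∀ c, 0 < ρ c := by
    intro c; simp only [hρ]; split
    · rename_i h
      obtain ⟨b, hb, hbe⟩ := Finset.exists_mem_eq_inf' h (fun b => dist a b + dist b c)
      refine lt_min one_pos ?_
      rw [hbe]
      have : a ≠ b := fun hab => haB (hab ▸ hb)
      have := dist_pos.mpr this
      positivity
    · exact one_pos
  have hρB : ∀ b ∈ B, ρ b = dist a b := by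
    intro b hb
    have h1 : ρ b ≤ dist a b := by
      simp only [hρ, dif_pos (show B.Nonempty from ⟨b, hb⟩)]
      refine le_trans (min_le_right _ _) ?_
      refine le_trans (Finset.inf'_le _ hb) ?_
      simp
    exact le_antisymm h1 (hρ_ge b)
  have hρ_lip : ∀ c c' : X, ρ c ≤ ρ c' + dist c' c := by
    intro c c'
    simp only [hρ]; split
    · rename_i h
      have hA : (B.inf' h fun b => dist a b + dist b c) ≤
          (B.inf' h fun b => dist a b + dist b c') + dist c' c := by
        obtain ⟨b, hb, hbe⟩ := Finset.exists_mem_eq_inf' h (fun b => dist a b + dist b c')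
        rw [hbe]
        refine le_trans (Finset.inf'_le _ hb) ?_
        have := dist_triangle b c' c
        linarith
      rcases le_total (1:ℝ) (B.inf' h fun b => dist a b + dist b c') with h2 | h2
      · rw [min_eq_left h2]
        linarith [min_le_left (1:ℝ) (B.inf' h fun b => dist a b + dist b c),
          dist_nonneg (x := c') (y := c)]
      · rw [min_eq_right h2]
        linarith [min_le_right (1:ℝ) (B.inf' h fun b => dist a b + dist b c)]
    · linarith [dist_nonneg (x := c') (y := c)]
  -- build the auxiliary finite metric space
  classical
  let Y := Option {x // x ∈ C}
  let d : Y → Y → ℝ := fun y z =>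
    match y, z with
    | Option.some c, Option.some c' => dist (c : X) (c' : X)
    | Option.some c, Option.none => ρ c
    | Option.none, Option.some c => ρ c
    | Option.none, Option.none => 0
  letI : MetricSpace Y :=
    { dist := d
      dist_self := by rintro (_ | c) <;> simp [d]
      dist_comm := by rintro (_ | c) (_ | c') <;> simp [d, dist_comm]
      dist_triangle := by
        rintro (_ | x) (_ | y) (_ | z) <;> simp only [d]
        · norm_num
        · linarith [hρ_pos (z : X)]
        · linarith [hρ_pos (y : X)]
        · linarith [hρ_lip (z : X) (y : X), dist_comm (y : X) (z : X)]
        · linarith [hρ_pos (x : X)]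
        · linarith [hρ_ge (x : X), hρ_ge (z : X),
            dist_triangle (x : X) a (z : X), dist_comm (x : X) a]
        · linarith [hρ_lip (x : X) (y : X), dist_comm (x : X) (y : X)]
        · exact dist_triangle _ _ _
      eq_of_dist_eq_zero := by
        rintro (_ | x) (_ | y) h <;> simp only [d] at h
        · rfl
        · exact absurd h (ne_of_gt (hρ_pos _))
        · exact absurd h (ne_of_gt (hρ_pos _))
        · exact congrArg _ (Subtype.ext (eq_of_dist_eq_zero h)) }
  have hYfin : Finite Y := inferInstance
  have hYdiam : ∀ y z : Y, dist y z ≤ 1 := by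
    rintro (_ | y) (_ | z)
    · exact zero_le_one
    · exact hρ_le_one _
    · exact hρ_le_one _
    · exact hX.diam_le_one _ _
  obtain ⟨f, hf⟩ := hX.universal Y hYdiam
  -- move the copy of C back onto C
  let φ : X → X := fun x => if h : x ∈ C then f (Option.some ⟨x, h⟩) else x
  obtain ⟨g, hg⟩ := hX.homogeneous C φ (by
    intro x hx y hy
    simp only [φ, dif_pos hx, dif_pos hy, hf.dist_eq]
    rfl)
  have hg' : ∀ x (h : x ∈ C), g x = f (Option.some ⟨x, h⟩) := by
    intro x h
    rw [hg x h]
    simp [φ, dif_pos h]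
  set a' : X := g.symm (f Option.none) with ha'
  have key : ∀ c (h : c ∈ C), dist a' c = ρ c := by
    intro c h
    rw [← g.dist_eq a' c, ha', IsometryEquiv.apply_symm_apply, hg' c h, hf.dist_eq]
    rfl
  have keyB : ∀ b ∈ B, dist a' b = dist a b := by
    intro b hb
    rw [key b (hBC hb), hρB b hb]
  refine ⟨a', keyB, ?_, ?_⟩
  · -- orbit condition
    let ψ : X → X := fun x => if x = a then a' else x
    obtain ⟨g', hg'⟩ := hX.homogeneous (insert a B) ψ (by
      intro x hx y hy
      by_cases hxa : x = a <;> by_cases hya : y = a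
      · simp [ψ, hxa, hya]
      · have hyB : y ∈ B := (Finset.mem_insert.mp hy).resolve_left hya
        simp only [ψ, if_pos hxa, if_neg hya]
        rw [hxa, keyB y hyB]
      · have hxB : x ∈ B := (Finset.mem_insert.mp hx).resolve_left hxa
        simp only [ψ, if_neg hxa, if_pos hya]
        rw [hya, dist_comm x a', keyB x hxB, dist_comm]
      · simp [ψ, if_neg hxa, if_neg hya])
    refine ⟨g', fun b hb => ?_, ?_⟩
    · have hb' : b ≠ a := fun h => haB (h ▸ hb)
      rw [hg' b (Finset.mem_insert_of_mem hb)]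
      simp [ψ, if_neg hb']
    · rw [hg' a (Finset.mem_insert_self a B)]
      simp [ψ]
  · -- independence
    rintro x hx c hc hlt
    rw [Set.mem_singleton_iff] at hx
    have hcC : c ∈ C := hc
    rw [hx] at hlt ⊢
    rw [key c hcC] at hlt ⊢
    have hBne : B.Nonempty := by
      by_contra hB
      simp only [hρ, dif_neg hB] at hlt
      exact absurd hlt (lt_irrefl 1)
    have hρc : ρ c = B.inf' hBne fun b => dist a b + dist b c := by
      simp only [hρ, dif_pos hBne] at hlt ⊢
      rcases le_total (1:ℝ) (B.inf' hBne fun b => dist a b + dist b c) with h1 | h1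
      · rw [min_eq_left h1] at hlt; exact absurd hlt (lt_irrefl 1)
      · rw [min_eq_right h1]
    obtain ⟨b, hb, hbe⟩ := Finset.exists_mem_eq_inf' hBne (fun b => dist a b + dist b c)
    refine ⟨b, hb, ?_⟩
    rw [hρc, hbe, keyB b hb]
end

section
/- Let X be a finite subset of U_1, let a be a point, and let e ≥ 0 with d(a,X) + e ≤ 1. Then there exists a point z ∈ U_1 with d(z,a) = e and d(z,x) = min(d(a,x) + e, 1) for all x ∈ X (the prolongation of the type of a over X by e), and moreover z is independent from X over a. -/
section ProlongAux

variable {X : Type} [MetricSpace X]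

/-- Distance function for the prolongation space: `insert a S` together with a new point. -/
noncomputable def pDist (a : X) (e : ℝ) (T : Finset X) :
    Option {t : X // t ∈ T} → Option {t : X // t ∈ T} → ℝ
  | some s, some t => dist s.1 t.1
  | some s, none => min (dist a s.1 + e) 1
  | none, some t => min (dist a t.1 + e) 1
  | none, none => 0

lemma pD_nonneg (a s : X) {e : ℝ} (he : 0 ≤ e) : 0 ≤ min (dist a s + e) 1 :=
  le_min (by positivity) zero_le_one

lemma pD_key1 (a s t : X) {e : ℝ} (he : 0 ≤ e) (hd : dist s t ≤ 1) :
    dist s t ≤ min (dist a s + e) 1 + min (dist a t + e) 1 := by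
  have h1 : dist s t ≤ dist s a + dist a t := dist_triangle s a t
  have h2 : dist s a = dist a s := dist_comm s a
  have n1 : (0:ℝ) ≤ min (dist a s + e) 1 := pD_nonneg a s he
  have n2 : (0:ℝ) ≤ min (dist a t + e) 1 := pD_nonneg a t he
  rcases le_total (dist a s + e) 1 with hA | hA <;>
    rcases le_total (dist a t + e) 1 with hB | hB <;>
    simp only [min_eq_left, min_eq_right, hA, hB] <;> linarith [min_eq_left hA,
      min_eq_right hA, min_eq_left hB, min_eq_right hB]

lemma pD_key2 (a s t : X) {e : ℝ} (he : 0 ≤ e) :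
    min (dist a s + e) 1 ≤ dist s t + min (dist a t + e) 1 := by
  have h1 : dist a s ≤ dist a t + dist t s := dist_triangle a t s
  have h2 : dist t s = dist s t := dist_comm t s
  have hml : min (dist a s + e) 1 ≤ dist a s + e := min_le_left _ _
  have hmr : min (dist a s + e) 1 ≤ 1 := min_le_right _ _
  rcases le_total (dist a t + e) 1 with hB | hB
  · rw [min_eq_left hB]; linarith
  · rw [min_eq_right hB]; linarith [dist_nonneg (x := s) (y := t)]

/-- The prolongation metric space. -/
noncomputable def pMS (a : X) (e : ℝ) (T : Finset X)
    (hd : ∀ x y : X, dist x y ≤ 1) (he0 : 0 < e) :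
    MetricSpace (Option {t : X // t ∈ T}) where
  dist := pDist a e T
  dist_self := by rintro (_ | s) <;> simp [pDist]
  dist_comm := by
    rintro (_ | s) (_ | t) <;> simp [pDist, dist_comm]
  dist_triangle := by
    rintro (_ | s) (_ | t) (_ | u) <;> simp only [pDist]
    · linarith
    · linarith
    · linarith [pD_nonneg a t.1 he0.le]
    · linarith [pD_key2 a u.1 t.1 he0.le, dist_comm t.1 u.1]
    · linarith
    · exact pD_key1 a s.1 u.1 he0.le (hd _ _)
    · exact pD_key2 a s.1 t.1 he0.le
    · exact dist_triangle s.1 t.1 u.1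
  eq_of_dist_eq_zero := by
    have hpos : ∀ s : X, 0 < min (dist a s + e) 1 :=
      fun s => lt_min (by linarith [dist_nonneg (x := a) (y := s)]) one_pos
    rintro (_ | s) (_ | t) h <;> simp only [pDist] at h
    · rfl
    · exact absurd h (ne_of_gt (hpos t.1))
    · exact absurd h (ne_of_gt (hpos s.1))
    · exact congrArg some (Subtype.ext (by rwa [← dist_eq_zero]))

end ProlongAux


theorem exists_prolongation (X : Type) [MetricSpace X] (hX : IsUrysohnOne X)
    (S : Finset X) (hS : S.Nonempty) (a : X) (e : ℝ) (he : 0 ≤ e)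
    (hle : typeDist a S hS + e ≤ 1) :
    ∃ z : X, dist z a = e ∧ (∀ x ∈ S, dist z x = min (dist a x + e) 1) ∧
      Indep {z} {a} (↑S) := by
  rcases eq_or_lt_of_le he with he0 | hepos
  · -- e = 0 : take z = a
    refine ⟨a, by simp [← he0], ?_, ?_⟩
    · intro x hx
      simp [← he0, min_eq_left (hX.diam_le_one a x)]
    · rintro p hp c hc hlt
      simp only [Set.mem_singleton_iff] at hp
      exact ⟨a, rfl, by rw [hp]; simp⟩
  · -- e > 0
    classical
    have he1 : e ≤ 1 := by
      have h0 : 0 ≤ typeDist a S hS := by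
        apply Finset.le_inf'
        intro b _
        exact dist_nonneg
      linarith
    set T : Finset X := insert a S with hT
    letI : MetricSpace (Option {t : X // t ∈ T}) :=
      pMS a e T hX.diam_le_one hepos
    have hdiam : ∀ y z : Option {t : X // t ∈ T}, dist y z ≤ 1 := by
      rintro (_ | s) (_ | t)
      · exact zero_le_one
      · exact min_le_right _ _
      · exact min_le_right _ _
      · exact hX.diam_le_one _ _
    obtain ⟨φ, hφ⟩ := hX.universal (Option {t : X // t ∈ T}) hdiam
    have hφinj : Function.Injective φ := hφ.injective
    set F : X → X := fun x =>
      if h : ∃ t : {t : X // t ∈ T}, φ (some t) = x then h.choose.1 else x with hF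
    set s' : Finset X := T.attach.image (fun t => φ (some t)) with hs'
    have hFspec : ∀ (t : {t : X // t ∈ T}), F (φ (some t)) = t.1 := by
      intro t
      have hex : ∃ u : {t : X // t ∈ T}, φ (some u) = φ (some t) := ⟨t, rfl⟩
      have := hex.choose_spec
      have : hex.choose = t := Option.some_injective _ (hφinj this)
      simp only [hF, dif_pos hex, this]
    have hiso : ∀ x ∈ s', ∀ y ∈ s', dist (F x) (F y) = dist x y := by
      intro x hx y hy
      simp only [hs', Finset.mem_image, Finset.mem_attach, true_and] at hx hy
      obtain ⟨t, rfl⟩ := hx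
      obtain ⟨u, rfl⟩ := hy
      rw [hFspec t, hFspec u, hφ.dist_eq (some t) (some u)]
      rfl
    obtain ⟨g, hg⟩ := hX.homogeneous s' F hiso
    refine ⟨g (φ none), ?_, ?_, ?_⟩
    all_goals
      have hdz : ∀ (t : X) (ht : t ∈ T), dist (g (φ none)) t = min (dist a t + e) 1 := by
        intro t ht
        have hmem : φ (some ⟨t, ht⟩) ∈ s' :=
          Finset.mem_image.2 ⟨⟨t, ht⟩, Finset.mem_attach _ _, rfl⟩
        have h1 : g (φ (some ⟨t, ht⟩)) = t := by
          rw [hg _ hmem, hFspec ⟨t, ht⟩]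
        calc dist (g (φ none)) t
            = dist (g (φ none)) (g (φ (some ⟨t, ht⟩))) := by rw [h1]
          _ = dist (φ none) (φ (some ⟨t, ht⟩)) := g.isometry.dist_eq _ _
          _ = dist (none : Option {t : X // t ∈ T}) (some ⟨t, ht⟩) := hφ.dist_eq _ _
          _ = min (dist a t + e) 1 := rfl
    · rw [hdz a (Finset.mem_insert_self a S)]
      simp [min_eq_left he1]
    · intro x hx
      exact hdz x (Finset.mem_insert_of_mem hx)
    · rintro p hp c hc hlt
      simp only [Set.mem_singleton_iff] at hp
      subst hp
      simp only [Finset.mem_coe] at hc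
      have hza : dist (g (φ none)) a = e := by
        rw [hdz a (Finset.mem_insert_self a S)]
        simp [min_eq_left he1]
      have hzc : dist (g (φ none)) c = min (dist a c + e) 1 :=
        hdz c (Finset.mem_insert_of_mem hc)
      have hmin : min (dist a c + e) 1 = dist a c + e := by
        rcases min_cases (dist a c + e) 1 with ⟨h, _⟩ | ⟨h, _⟩
        · exact h
        · exact absurd (hzc.trans h) (ne_of_lt hlt)
      exact ⟨a, rfl, by rw [hzc, hmin, hza]; ring⟩
end

section
/- Let a, b be points of U_1 with d(a,b) = 1, let k > 0, and let m be an integer with m·k ≥ 1. Then there exist points a_0 = a, a_1, ..., a_m = b in U_1 with d(a_{i−1}, a_i) = k for all i = 1,...,m. -/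
structure PIdx (m : ℕ) where
  val : Fin (m + 1)

instance (m : ℕ) : Finite (PIdx m) :=
  Finite.of_injective PIdx.val (fun a b h => by cases a; cases b; simpa using h)

lemma path_aux (m : ℕ) (k : ℝ) (hk : 0 < k) :
    ∀ i j l : Fin (m+1), min (|(i:ℝ) - (l:ℝ)| * k) 1 ≤
      min (|(i:ℝ) - (j:ℝ)| * k) 1 + min (|(j:ℝ) - (l:ℝ)| * k) 1 := by
  intro i j l
  have hx0 : (0:ℝ) ≤ |(i:ℝ) - (j:ℝ)| * k := by positivity
  have hy0 : (0:ℝ) ≤ |(j:ℝ) - (l:ℝ)| * k := by positivity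
  rcases le_or_gt 1 (min (|(i:ℝ) - (j:ℝ)| * k) 1 + min (|(j:ℝ) - (l:ℝ)| * k) 1) with h | h
  · exact le_trans (min_le_right _ _) h
  · have hx : min (|(i:ℝ) - (j:ℝ)| * k) 1 = |(i:ℝ) - (j:ℝ)| * k := by
      rcases min_cases (|(i:ℝ) - (j:ℝ)| * k) 1 with ⟨h1, _⟩ | ⟨h1, _⟩
      · exact h1
      · exfalso; rw [h1] at h
        have : (0:ℝ) ≤ min (|(j:ℝ) - (l:ℝ)| * k) 1 := le_min hy0 zero_le_one
        linarith
    have hy : min (|(j:ℝ) - (l:ℝ)| * k) 1 = |(j:ℝ) - (l:ℝ)| * k := by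
      rcases min_cases (|(j:ℝ) - (l:ℝ)| * k) 1 with ⟨h1, _⟩ | ⟨h1, _⟩
      · exact h1
      · exfalso; rw [h1] at h
        have : (0:ℝ) ≤ min (|(i:ℝ) - (j:ℝ)| * k) 1 := le_min hx0 zero_le_one
        linarith
    rw [hx, hy]
    calc min (|(i:ℝ) - (l:ℝ)| * k) 1 ≤ |(i:ℝ) - (l:ℝ)| * k := min_le_left _ _
      _ ≤ (|(i:ℝ) - (j:ℝ)| + |(j:ℝ) - (l:ℝ)|) * k :=
          mul_le_mul_of_nonneg_right (abs_sub_le _ _ _) hk.le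
      _ = |(i:ℝ) - (j:ℝ)| * k + |(j:ℝ) - (l:ℝ)| * k := add_mul _ _ _

noncomputable def pathMetric (m : ℕ) (k : ℝ) (hk : 0 < k) : MetricSpace (PIdx m) where
  dist i j := min (|(i.val : ℝ) - (j.val : ℝ)| * k) 1
  dist_self i := by simp
  dist_comm i j := by show min _ 1 = min _ 1; rw [abs_sub_comm]
  dist_triangle i j l := path_aux m k hk i.val j.val l.val
  eq_of_dist_eq_zero := by
    intro i j h
    rcases min_eq_iff.mp h with ⟨h1, _⟩ | ⟨h1, _⟩
    · have : |(i.val : ℝ) - (j.val : ℝ)| = 0 := by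
        rcases mul_eq_zero.mp h1 with h2 | h2
        · exact h2
        · exact absurd h2 hk.ne'
      have : (i.val : ℝ) = (j.val : ℝ) := by linarith [abs_eq_zero.mp this, sub_eq_zero.mp (abs_eq_zero.mp this)]
      rcases i with ⟨i⟩; rcases j with ⟨j⟩
      congr 1
      exact Fin.ext (by exact_mod_cast this)
    · norm_num at h1

theorem exists_path_of_steps (X : Type) [MetricSpace X] (hX : IsUrysohnOne X)
    (a b : X) (hab : dist a b = 1) (k : ℝ) (hk : 0 < k) (hk1 : k ≤ 1)
    (m : ℕ) (hm : 1 ≤ (m : ℝ) * k) :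
    ∃ f : Fin (m + 1) → X, f 0 = a ∧ f (Fin.last m) = b ∧
      ∀ i : Fin m, dist (f i.castSucc) (f i.succ) = k := by
  classical
  letI := pathMetric m k hk
  have hdist : ∀ i j : PIdx m, dist i j = min (|(i.val : ℝ) - (j.val : ℝ)| * k) 1 :=
    fun _ _ => rfl
  obtain ⟨f, hf⟩ := hX.universal (PIdx m) (fun y z => by rw [hdist]; exact min_le_right _ _)
  -- f is an isometry from PIdx m to X
  have hfe : ∀ i j : PIdx m, dist (f i) (f j) = min (|(i.val : ℝ) - (j.val : ℝ)| * k) 1 :=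
    fun i j => by rw [hf.dist_eq, hdist]
  set p0 : X := f ⟨0⟩
  set p1 : X := f ⟨Fin.last m⟩
  have hp : dist p0 p1 = 1 := by
    rw [hfe]
    simp only [Fin.val_zero, Fin.val_last, Nat.cast_zero, zero_sub, abs_neg, Nat.cast_ofNat]
    rw [abs_of_nonneg (by positivity : (0:ℝ) ≤ (m:ℝ))]
    exact min_eq_right hm
  have hne : p0 ≠ p1 := by
    intro h; rw [h, dist_self] at hp; norm_num at hp
  -- use homogeneity to move p0 ↦ a, p1 ↦ b
  have hside : ∀ x ∈ ({p0, p1} : Finset X), ∀ y ∈ ({p0, p1} : Finset X),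
      dist ((fun x => if x = p0 then a else b) x) ((fun x => if x = p0 then a else b) y)
        = dist x y := by
    intro x hx y hy
    simp only [Finset.mem_insert, Finset.mem_singleton] at hx hy
    rcases hx with rfl | rfl <;> rcases hy with rfl | rfl
    · simp
    · show dist (if p0 = p0 then a else b) (if p1 = p0 then a else b) = dist p0 p1
      rw [if_pos rfl, if_neg (fun h => hne h.symm), hab, hp]
    · show dist (if p1 = p0 then a else b) (if p0 = p0 then a else b) = dist p1 p0
      rw [if_pos rfl, if_neg (fun h => hne h.symm), dist_comm b a, hab, dist_comm p1 p0, hp]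
    · show dist (if p1 = p0 then a else b) (if p1 = p0 then a else b) = dist p1 p1
      rw [if_neg (fun h => hne h.symm)]; simp
  obtain ⟨g, hg⟩ := hX.homogeneous {p0, p1} (fun x => if x = p0 then a else b) hside
  · refine ⟨fun i => g (f ⟨i⟩), ?_, ?_, ?_⟩
    · have := hg p0 (by simp)
      simpa [hne] using this
    · have := hg p1 (by simp)
      rw [if_neg (fun h => hne h.symm)] at this
      simpa using this
    · intro i
      rw [g.dist_eq, hfe]
      have : |((i.castSucc : Fin (m+1)) : ℝ) - ((i.succ : Fin (m+1)) : ℝ)| = 1 := by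
        rw [Fin.coe_castSucc, Fin.val_succ]
        push_cast
        have h2 : (i:ℝ) - ((i:ℝ) + 1) = -1 := by ring
        rw [h2, abs_neg, abs_one]
      rw [this, one_mul]
      exact min_eq_left hk1
end
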